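/- arXiv:0904.4386 — 5 statements merged into one kernel-verified Lean document; each statement's English description precedes it below -/
import Mathlib

section
/- Let d ≥ 1 be an integer, α ∈ (0,2), and γ ≥ 0 with γ ≠ d. Set γ' = min(γ + α, d + α). Then there exists a constant C = C(d, α, γ) > 0 such that for every x ∈ ℝ^d with |x| ≥ 1 one has ∫_{B(x,|x|/4)^c} (1 + |y|)^{−γ} |x − y|^{−d−α} dy ≤ C |x|^{−γ'}. -/
open MeasureTheory Metric Set

lemma aux_nontrivial (d : ℕ) (hd : 1 ≤ d) : Nontrivial (EuclideanSpace ℝ (Fin d)) := by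
  apply Module.nontrivial_of_finrank_pos (R := ℝ)
  rw [finrank_euclideanSpace_fin]; exact hd

lemma aux_polar (d : ℕ) (hd : 1 ≤ d) (F : ℝ → ℝ) :
    ∫ z : EuclideanSpace ℝ (Fin d), F ‖z‖ =
      (d : ℝ) * (volume (ball (0 : EuclideanSpace ℝ (Fin d)) 1)).toReal *
        ∫ t in Ioi (0:ℝ), t ^ (d-1) * F t := by
  haveI := aux_nontrivial d hd
  rw [integral_fun_norm_addHaar volume F]
  simp [finrank_euclideanSpace_fin, nsmul_eq_mul, smul_eq_mul, mul_assoc, Measure.real]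

lemma aux_tail_int (d : ℕ) (s : ℝ) (hs : (d:ℝ) < s) (ρ : ℝ) (hρ : 0 < ρ) :
    IntegrableOn (fun z : EuclideanSpace ℝ (Fin d) => ‖z‖ ^ (-s))
      (ball (0 : EuclideanSpace ℝ (Fin d)) ρ)ᶜ volume := by
  have hint : Integrable (fun z : EuclideanSpace ℝ (Fin d) =>
      ((1+ρ)/ρ) ^ s * (1 + ‖z‖) ^ (-s)) volume := by
    apply Integrable.const_mul
    apply integrable_one_add_norm (E := EuclideanSpace ℝ (Fin d))
    rwa [finrank_euclideanSpace_fin]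
  refine Integrable.mono' hint.restrict
    ((measurable_norm.pow_const _).aestronglyMeasurable) ?_
  · filter_upwards [ae_restrict_mem measurableSet_ball.compl] with z hz
    have hz' : ρ ≤ ‖z‖ := by
      simpa [dist_zero_right] using (mem_compl_iff _ _).mp hz
    have hz0 : 0 < ‖z‖ := lt_of_lt_of_le hρ hz'
    rw [Real.norm_of_nonneg (Real.rpow_nonneg (norm_nonneg z) _)]
    have h1 : 1 + ‖z‖ ≤ ((1+ρ)/ρ) * ‖z‖ := by
      rw [div_mul_eq_mul_div, le_div_iff₀ hρ]
      nlinarith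
    calc ‖z‖ ^ (-s) = ((1+ρ)/ρ) ^ s * ((((1+ρ)/ρ)) ^ (-s) * ‖z‖ ^ (-s)) := by
          rw [← mul_assoc, ← Real.rpow_add (by positivity)]
          simp
      _ = ((1+ρ)/ρ) ^ s * (((1+ρ)/ρ) * ‖z‖) ^ (-s) := by
          rw [Real.mul_rpow (by positivity) (norm_nonneg z)]
      _ ≤ ((1+ρ)/ρ) ^ s * (1 + ‖z‖) ^ (-s) := by
          have := Real.rpow_le_rpow_of_nonpos (by positivity) h1
            (neg_nonpos.mpr (le_trans (Nat.cast_nonneg d) hs.le))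
          exact mul_le_mul_of_nonneg_left this (by positivity)

lemma aux_tail_val (d : ℕ) (hd : 1 ≤ d) (s : ℝ) (hs : (d:ℝ) < s) (ρ : ℝ) (hρ : 0 < ρ) :
    ∫ z in (ball (0 : EuclideanSpace ℝ (Fin d)) ρ)ᶜ, ‖z‖ ^ (-s) ∂volume =
      (d : ℝ) * (volume (ball (0 : EuclideanSpace ℝ (Fin d)) 1)).toReal *
        (ρ ^ ((d:ℝ) - s) / (s - d)) := by
  rw [← integral_indicator measurableSet_ball.compl]
  have hpt : ∀ z : EuclideanSpace ℝ (Fin d),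
      indicator (ball (0 : EuclideanSpace ℝ (Fin d)) ρ)ᶜ (fun z => ‖z‖ ^ (-s)) z =
      indicator (Ici ρ) (fun t => t ^ (-s)) ‖z‖ := by
    intro z
    have : z ∈ (ball (0 : EuclideanSpace ℝ (Fin d)) ρ)ᶜ ↔ ρ ≤ ‖z‖ := by
      simp [dist_zero_right, not_lt]
    by_cases hz : ρ ≤ ‖z‖
    · rw [Set.indicator_of_mem (this.mpr hz), Set.indicator_of_mem (mem_Ici.mpr hz)]
    · rw [Set.indicator_of_notMem (fun h => hz (this.mp h)),
        Set.indicator_of_notMem (fun h => hz (mem_Ici.mp h))]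
  simp_rw [hpt]
  rw [aux_polar d hd]
  congr 1
  have hpt2 : ∀ t ∈ Ioi (0:ℝ), t ^ (d-1) * indicator (Ici ρ) (fun t => t ^ (-s)) t =
      indicator (Ici ρ) (fun t : ℝ => t ^ ((d:ℝ) - 1 - s)) t := by
    intro t ht
    by_cases h : ρ ≤ t
    · rw [Set.indicator_of_mem (mem_Ici.mpr h), Set.indicator_of_mem (mem_Ici.mpr h)]
      have ht0 : (0:ℝ) < t := ht
      rw [← Real.rpow_natCast t (d-1), ← Real.rpow_add ht0]
      congr 1
      rw [Nat.cast_sub hd]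
      push_cast; ring
    · rw [Set.indicator_of_notMem (fun hh => h (mem_Ici.mp hh)),
        Set.indicator_of_notMem (fun hh => h (mem_Ici.mp hh)), mul_zero]
  rw [setIntegral_congr_fun measurableSet_Ioi hpt2,
    setIntegral_indicator measurableSet_Ici,
    Set.inter_eq_self_of_subset_right (Set.Ici_subset_Ioi.mpr hρ),
    integral_Ici_eq_integral_Ioi, integral_Ioi_rpow_of_lt (by linarith) hρ]
  rw [show (d:ℝ) - 1 - s + 1 = (d:ℝ) - s by ring]
  rw [neg_div, ← div_neg, show -((d:ℝ) - s) = s - d by ring]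

lemma aux_ball_val (d : ℕ) (hd : 1 ≤ d) (γ : ℝ) (hγ : 0 ≤ γ) (hγd : γ < d) (T : ℝ)
    (hT : 0 < T) :
    ∫ y in closedBall (0 : EuclideanSpace ℝ (Fin d)) T, (1 + ‖y‖) ^ (-γ) ∂volume ≤
      (d : ℝ) * (volume (ball (0 : EuclideanSpace ℝ (Fin d)) 1)).toReal *
        (T ^ ((d:ℝ) - γ) / ((d:ℝ) - γ)) := by
  rw [← integral_indicator measurableSet_closedBall]
  have hpt : ∀ y : EuclideanSpace ℝ (Fin d),
      indicator (closedBall (0 : EuclideanSpace ℝ (Fin d)) T) (fun y => (1 + ‖y‖) ^ (-γ)) y =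
      indicator (Icc 0 T) (fun t => (1 + t) ^ (-γ)) ‖y‖ := by
    intro y
    have hmem : y ∈ closedBall (0 : EuclideanSpace ℝ (Fin d)) T ↔ ‖y‖ ∈ Icc 0 T := by
      simp [dist_zero_right, norm_nonneg]
    by_cases hy : y ∈ closedBall (0 : EuclideanSpace ℝ (Fin d)) T
    · rw [Set.indicator_of_mem hy, Set.indicator_of_mem (hmem.mp hy)]
    · rw [Set.indicator_of_notMem hy, Set.indicator_of_notMem (fun h => hy (hmem.mpr h))]
  simp_rw [hpt]
  rw [aux_polar d hd]
  have hc : (0:ℝ) ≤ (d : ℝ) * (volume (ball (0 : EuclideanSpace ℝ (Fin d)) 1)).toReal := by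
    positivity
  apply mul_le_mul_of_nonneg_left _ hc
  -- bound the 1-d integral
  have hInt : IntegrableOn (fun t : ℝ => t ^ ((d:ℝ) - 1 - γ)) (Ioc 0 T) volume := by
    have := intervalIntegral.intervalIntegrable_rpow' (a := 0) (b := T)
      (r := (d:ℝ) - 1 - γ) (by linarith)
    rwa [intervalIntegrable_iff_integrableOn_Ioc_of_le hT.le] at this
  have hmono : ∫ t in Ioi (0:ℝ), t ^ (d-1) * indicator (Icc 0 T) (fun t => (1 + t) ^ (-γ)) t ≤
      ∫ t in Ioi (0:ℝ), indicator (Ioc 0 T) (fun t : ℝ => t ^ ((d:ℝ) - 1 - γ)) t := by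
    apply integral_mono_of_nonneg
    · filter_upwards [ae_restrict_mem measurableSet_Ioi] with t ht
      have ht0 : (0:ℝ) < t := ht
      by_cases h : t ∈ Icc (0:ℝ) T
      · rw [Set.indicator_of_mem h]; positivity
      · simp [Set.indicator_of_notMem h]
    · exact (hInt.integrable_indicator measurableSet_Ioc).restrict
    · filter_upwards [ae_restrict_mem measurableSet_Ioi] with t ht
      have ht0 : (0:ℝ) < t := ht
      by_cases h : t ≤ T
      · rw [Set.indicator_of_mem (mem_Icc.mpr ⟨ht0.le, h⟩),
          Set.indicator_of_mem (mem_Ioc.mpr ⟨ht0, h⟩)]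
        have h1 : (1 + t) ^ (-γ) ≤ t ^ (-γ) :=
          Real.rpow_le_rpow_of_nonpos ht0 (by linarith) (neg_nonpos.mpr hγ)
        calc t ^ (d-1) * (1 + t) ^ (-γ) ≤ t ^ (d-1) * t ^ (-γ) := by
              exact mul_le_mul_of_nonneg_left h1 (by positivity)
          _ = t ^ ((d:ℝ) - 1 - γ) := by
              rw [← Real.rpow_natCast t (d-1), ← Real.rpow_add ht0]
              congr 1
              rw [Nat.cast_sub hd]; push_cast; ring
      · rw [Set.indicator_of_notMem (s := Set.Icc 0 T) (fun hh => h (mem_Icc.mp hh).2),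
          Set.indicator_of_notMem (s := Set.Ioc 0 T) (fun hh => h (mem_Ioc.mp hh).2), mul_zero]
  refine hmono.trans ?_
  rw [setIntegral_indicator measurableSet_Ioc,
    Set.inter_eq_self_of_subset_right (fun t ht => ht.1),
    ← intervalIntegral.integral_of_le hT.le,
    integral_rpow (Or.inl (by linarith))]
  rw [Real.zero_rpow (by intro h; linarith), show (d:ℝ) - 1 - γ + 1 = (d:ℝ) - γ by ring]
  simp

lemma aux_main (d : ℕ) (hd : 1 ≤ d) (α : ℝ) (hα0 : 0 < α) (γ : ℝ) (hγ : 0 ≤ γ)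
    (x : EuclideanSpace ℝ (Fin d)) (hx : 1 ≤ ‖x‖) :
    (∫ y in (Metric.ball x (‖x‖ / 4))ᶜ, (1 + ‖y‖) ^ (-γ) * ‖x - y‖ ^ (-(d : ℝ) - α) ∂volume)
      ≤ (‖x‖/4) ^ (-(d:ℝ)-α) *
          (∫ y in closedBall (0 : EuclideanSpace ℝ (Fin d)) (‖x‖/2), (1 + ‖y‖) ^ (-γ) ∂volume)
        + (‖x‖/2) ^ (-γ) * ((d : ℝ) * (volume (ball (0 : EuclideanSpace ℝ (Fin d)) 1)).toReal *
            ((‖x‖/4) ^ (-α) / α)) := by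
  have hR0 : (0:ℝ) < ‖x‖ := lt_of_lt_of_le one_pos hx
  set R := ‖x‖ with hRdef
  have hr0 : (0:ℝ) < R/4 := by positivity
  have hds : (d:ℝ) < (d:ℝ) + α := by linarith
  have hexp : -((d:ℝ) + α) = -(d:ℝ) - α := by ring
  have hmp : MeasurePreserving (fun y : EuclideanSpace ℝ (Fin d) => x - y) volume volume :=
    Measure.measurePreserving_sub_left volume x
  have hemb : MeasurableEmbedding (fun y : EuclideanSpace ℝ (Fin d) => x - y) :=
    (MeasurableEquiv.subLeft x).measurableEmbedding
  have hpre : (fun y : EuclideanSpace ℝ (Fin d) => x - y) ⁻¹' (ball (0 : EuclideanSpace ℝ (Fin d)) (R/4))ᶜ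
      = (ball x (R/4))ᶜ := by
    ext y
    simp [dist_eq_norm, norm_sub_rev]
  -- integrability of tail piece
  have hint_tail : IntegrableOn (fun y : EuclideanSpace ℝ (Fin d) => ‖x - y‖ ^ (-(d:ℝ) - α))
      (ball x (R/4))ᶜ volume := by
    have h1 := aux_tail_int d ((d:ℝ) + α) hds (R/4) hr0
    have h2 := (hmp.integrableOn_comp_preimage hemb).mpr h1
    rw [hpre] at h2
    simpa [Function.comp_def, hexp] using h2
  -- integrability of ball piece (as an indicator)
  have hcont : Continuous fun y : EuclideanSpace ℝ (Fin d) => (1 + ‖y‖) ^ (-γ) :=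
    (continuous_const.add continuous_norm).rpow_const (fun y => Or.inl (add_pos_of_pos_of_nonneg one_pos (norm_nonneg y)).ne')
  have hind : Integrable (indicator (closedBall (0 : EuclideanSpace ℝ (Fin d)) (R/2))
      (fun y => (1 + ‖y‖) ^ (-γ))) volume :=
    (hcont.continuousOn.integrableOn_compact (isCompact_closedBall _ _)).integrable_indicator
      measurableSet_closedBall
  set g := fun y : EuclideanSpace ℝ (Fin d) =>
    (R/4) ^ (-(d:ℝ)-α) * indicator (closedBall (0 : EuclideanSpace ℝ (Fin d)) (R/2))
      (fun y => (1 + ‖y‖) ^ (-γ)) y + (R/2) ^ (-γ) * ‖x - y‖ ^ (-(d:ℝ) - α) with hgdef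
  have hg1int : Integrable (fun y : EuclideanSpace ℝ (Fin d) =>
      (R/4) ^ (-(d:ℝ)-α) * indicator (closedBall (0 : EuclideanSpace ℝ (Fin d)) (R/2))
        (fun y => (1 + ‖y‖) ^ (-γ)) y) (volume.restrict (ball x (R/4))ᶜ) :=
    (hind.const_mul _).restrict
  have hg2int : Integrable (fun y : EuclideanSpace ℝ (Fin d) =>
      (R/2) ^ (-γ) * ‖x - y‖ ^ (-(d:ℝ) - α)) (volume.restrict (ball x (R/4))ᶜ) :=
    hint_tail.const_mul _
  have hgint : Integrable g (volume.restrict (ball x (R/4))ᶜ) := hg1int.add hg2int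
  have hf0 : 0 ≤ᵐ[volume.restrict (ball x (R/4))ᶜ]
      fun y : EuclideanSpace ℝ (Fin d) => (1 + ‖y‖) ^ (-γ) * ‖x - y‖ ^ (-(d:ℝ) - α) :=
    Filter.Eventually.of_forall fun y => mul_nonneg (Real.rpow_nonneg (by positivity) _)
      (Real.rpow_nonneg (norm_nonneg _) _)
  have hfg : (fun y : EuclideanSpace ℝ (Fin d) => (1 + ‖y‖) ^ (-γ) * ‖x - y‖ ^ (-(d:ℝ) - α))
      ≤ᵐ[volume.restrict (ball x (R/4))ᶜ] g := by
    filter_upwards [ae_restrict_mem measurableSet_ball.compl] with y hy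
    have hxy : R/4 ≤ ‖x - y‖ := by
      have h := (mem_compl_iff _ _).mp hy
      rw [mem_ball, not_lt, dist_eq_norm, norm_sub_rev] at h
      exact h
    have hnd : -(d:ℝ) - α ≤ 0 := by
      have : (0:ℝ) ≤ (d:ℝ) := Nat.cast_nonneg d
      linarith
    by_cases hyR : ‖y‖ ≤ R/2
    · have h1 : ‖x - y‖ ^ (-(d:ℝ) - α) ≤ (R/4) ^ (-(d:ℝ)-α) :=
        Real.rpow_le_rpow_of_nonpos hr0 hxy hnd
      have hmem : y ∈ closedBall (0 : EuclideanSpace ℝ (Fin d)) (R/2) := by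
        simpa [dist_zero_right] using hyR
      have h2 : (1 + ‖y‖) ^ (-γ) * ‖x - y‖ ^ (-(d:ℝ) - α)
          ≤ (R/4) ^ (-(d:ℝ)-α) * indicator (closedBall (0 : EuclideanSpace ℝ (Fin d)) (R/2))
            (fun y => (1 + ‖y‖) ^ (-γ)) y := by
        rw [Set.indicator_of_mem hmem, mul_comm ((R/4) ^ (-(d:ℝ)-α))]
        exact mul_le_mul_of_nonneg_left h1 (Real.rpow_nonneg (by positivity) _)
      have h3 : 0 ≤ (R/2) ^ (-γ) * ‖x - y‖ ^ (-(d:ℝ) - α) :=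
        mul_nonneg (Real.rpow_nonneg (by positivity) _) (Real.rpow_nonneg (norm_nonneg _) _)
      rw [hgdef]
      dsimp only
      linarith
    · have h1 : (1 + ‖y‖) ^ (-γ) ≤ (R/2) ^ (-γ) := by
        apply Real.rpow_le_rpow_of_nonpos (by positivity) _ (neg_nonpos.mpr hγ)
        have := not_le.mp hyR
        linarith [norm_nonneg y]
      have h2 : (1 + ‖y‖) ^ (-γ) * ‖x - y‖ ^ (-(d:ℝ) - α)
          ≤ (R/2) ^ (-γ) * ‖x - y‖ ^ (-(d:ℝ) - α) :=
        mul_le_mul_of_nonneg_right h1 (Real.rpow_nonneg (norm_nonneg _) _)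
      have h3 : 0 ≤ (R/4) ^ (-(d:ℝ)-α) * indicator (closedBall (0 : EuclideanSpace ℝ (Fin d)) (R/2))
          (fun y => (1 + ‖y‖) ^ (-γ)) y :=
        mul_nonneg (Real.rpow_nonneg (by positivity) _)
          (Set.indicator_nonneg (fun y _ => Real.rpow_nonneg (by positivity) _) y)
      rw [hgdef]
      dsimp only
      linarith
  calc (∫ y in (ball x (R/4))ᶜ, (1 + ‖y‖) ^ (-γ) * ‖x - y‖ ^ (-(d : ℝ) - α) ∂volume)
      ≤ ∫ y in (ball x (R/4))ᶜ, g y ∂volume := integral_mono_of_nonneg hf0 hgint hfg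
    _ = (∫ y in (ball x (R/4))ᶜ, (R/4) ^ (-(d:ℝ)-α) *
          indicator (closedBall (0 : EuclideanSpace ℝ (Fin d)) (R/2))
            (fun y => (1 + ‖y‖) ^ (-γ)) y ∂volume)
        + ∫ y in (ball x (R/4))ᶜ, (R/2) ^ (-γ) * ‖x - y‖ ^ (-(d:ℝ) - α) ∂volume :=
        integral_add hg1int hg2int
    _ ≤ (R/4) ^ (-(d:ℝ)-α) *
          (∫ y in closedBall (0 : EuclideanSpace ℝ (Fin d)) (R/2), (1 + ‖y‖) ^ (-γ) ∂volume)
        + (R/2) ^ (-γ) * ((d : ℝ) * (volume (ball (0 : EuclideanSpace ℝ (Fin d)) 1)).toReal *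
            ((R/4) ^ (-α) / α)) := by
        gcongr ?_ + ?_
        · rw [integral_const_mul]
          apply mul_le_mul_of_nonneg_left _ (Real.rpow_nonneg (by positivity) _)
          rw [← integral_indicator measurableSet_closedBall]
          exact setIntegral_le_integral hind (Filter.Eventually.of_forall fun y =>
            Set.indicator_nonneg (fun y _ => Real.rpow_nonneg (by positivity) _) y)
        · rw [integral_const_mul]
          apply mul_le_mul_of_nonneg_left _ (Real.rpow_nonneg (by positivity) _)
          have hval : (∫ y in (ball x (R/4))ᶜ, ‖x - y‖ ^ (-(d:ℝ) - α) ∂volume)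
              = ∫ z in (ball (0 : EuclideanSpace ℝ (Fin d)) (R/4))ᶜ, ‖z‖ ^ (-(d:ℝ) - α) ∂volume := by
            rw [← hpre, ← hmp.setIntegral_preimage_emb hemb
              (fun z => ‖z‖ ^ (-(d:ℝ) - α)) (ball (0 : EuclideanSpace ℝ (Fin d)) (R/4))ᶜ]
          rw [hval, ← hexp, aux_tail_val d hd ((d:ℝ) + α) hds (R/4) hr0,
            show (d:ℝ) - ((d:ℝ) + α) = -α by ring, show (d:ℝ) + α - (d:ℝ) = α by ring]

/-- Estimate (2.6): for `γ ≥ 0`, `γ ≠ d`, with `γ' = min (γ + α) (d + α)`,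
`∫_{B(x,|x|/4)^c} (1 + |y|)^{-γ} |x - y|^{-d-α} dy ≤ C |x|^{-γ'}` for `|x| ≥ 1`. -/

theorem stmt_0 (d : ℕ) (hd : 1 ≤ d) (α : ℝ) (hα : α ∈ Set.Ioo (0 : ℝ) 2)
    (γ : ℝ) (hγ : 0 ≤ γ) (hγd : γ ≠ (d : ℝ)) :
    ∃ C : ℝ, 0 < C ∧ ∀ x : EuclideanSpace ℝ (Fin d), 1 ≤ ‖x‖ →
      (∫ y in (Metric.ball x (‖x‖ / 4))ᶜ,
          (1 + ‖y‖) ^ (-γ) * ‖x - y‖ ^ (-(d : ℝ) - α) ∂volume)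
        ≤ C * ‖x‖ ^ (-(min (γ + α) ((d : ℝ) + α))) := by
  obtain ⟨hα0, hα2⟩ := hα
  set c : ℝ := (d : ℝ) * (volume (ball (0 : EuclideanSpace ℝ (Fin d)) 1)).toReal with hc
  have hc0 : 0 ≤ c := by positivity
  have hC2 : (0:ℝ) ≤ (2:ℝ)^γ * (c * ((4:ℝ)^α / α)) := by positivity
  rcases lt_or_gt_of_ne hγd with hlt | hgt
  · -- case γ < d
    refine ⟨(4:ℝ)^((d:ℝ)+α) * (c * ((2:ℝ)^(γ-(d:ℝ)) / ((d:ℝ)-γ)))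
        + (2:ℝ)^γ * (c * ((4:ℝ)^α / α)) + 1, ?_, ?_⟩
    · have h1 : (0:ℝ) ≤ (4:ℝ)^((d:ℝ)+α) * (c * ((2:ℝ)^(γ-(d:ℝ)) / ((d:ℝ)-γ))) := by
        have : (0:ℝ) < (d:ℝ) - γ := by linarith
        positivity
      linarith
    intro x hx
    have hR0 : (0:ℝ) < ‖x‖ := lt_of_lt_of_le one_pos hx
    have hmin : min (γ + α) ((d:ℝ) + α) = γ + α := min_eq_left (by linarith)
    rw [hmin]
    have hmain := aux_main d hd α hα0 γ hγ x hx
    rw [← hc] at hmain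
    have hball := aux_ball_val d hd γ hγ hlt (‖x‖/2) (by positivity)
    have e1 : (‖x‖/4) ^ (-(d:ℝ)-α) = (4:ℝ)^((d:ℝ)+α) * ‖x‖ ^ (-(d:ℝ)-α) := by
      rw [Real.div_rpow hR0.le (by norm_num), div_eq_mul_inv,
        ← Real.rpow_neg (by norm_num : (0:ℝ) ≤ 4), show -(-(d:ℝ)-α) = (d:ℝ)+α by ring, mul_comm]
    have e2 : (‖x‖/2) ^ ((d:ℝ)-γ) = (2:ℝ)^(γ-(d:ℝ)) * ‖x‖ ^ ((d:ℝ)-γ) := by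
      rw [Real.div_rpow hR0.le (by norm_num), div_eq_mul_inv,
        ← Real.rpow_neg (by norm_num : (0:ℝ) ≤ 2), show -((d:ℝ)-γ) = γ-(d:ℝ) by ring, mul_comm]
    have e3 : (‖x‖/2) ^ (-γ) = (2:ℝ)^γ * ‖x‖ ^ (-γ) := by
      rw [Real.div_rpow hR0.le (by norm_num), div_eq_mul_inv,
        ← Real.rpow_neg (by norm_num : (0:ℝ) ≤ 2), show -(-γ) = γ by ring, mul_comm]
    have e4 : (‖x‖/4) ^ (-α) = (4:ℝ)^α * ‖x‖ ^ (-α) := by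
      rw [Real.div_rpow hR0.le (by norm_num), div_eq_mul_inv,
        ← Real.rpow_neg (by norm_num : (0:ℝ) ≤ 4), show -(-α) = α by ring, mul_comm]
    have e5 : ‖x‖ ^ (-(d:ℝ)-α) * ‖x‖ ^ ((d:ℝ)-γ) = ‖x‖ ^ (-(γ+α)) := by
      rw [← Real.rpow_add hR0]; congr 1; ring
    have e6 : ‖x‖ ^ (-γ) * ‖x‖ ^ (-α) = ‖x‖ ^ (-(γ+α)) := by
      rw [← Real.rpow_add hR0]; congr 1; ring
    have ht1 : (‖x‖/4) ^ (-(d:ℝ)-α) *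
        (∫ y in closedBall (0 : EuclideanSpace ℝ (Fin d)) (‖x‖/2), (1 + ‖y‖) ^ (-γ) ∂volume)
        ≤ ((4:ℝ)^((d:ℝ)+α) * (c * ((2:ℝ)^(γ-(d:ℝ)) / ((d:ℝ)-γ)))) * ‖x‖ ^ (-(γ+α)) := by
      calc (‖x‖/4) ^ (-(d:ℝ)-α) *
            (∫ y in closedBall (0 : EuclideanSpace ℝ (Fin d)) (‖x‖/2), (1 + ‖y‖) ^ (-γ) ∂volume)
          ≤ (‖x‖/4) ^ (-(d:ℝ)-α) * (c * ((‖x‖/2) ^ ((d:ℝ)-γ) / ((d:ℝ)-γ))) :=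
            mul_le_mul_of_nonneg_left hball (Real.rpow_nonneg (by positivity) _)
        _ = ((4:ℝ)^((d:ℝ)+α) * (c * ((2:ℝ)^(γ-(d:ℝ)) / ((d:ℝ)-γ)))) *
            (‖x‖ ^ (-(d:ℝ)-α) * ‖x‖ ^ ((d:ℝ)-γ)) := by rw [e1, e2]; ring
        _ = _ := by rw [e5]
    have ht2 : (‖x‖/2) ^ (-γ) * (c * ((‖x‖/4) ^ (-α) / α))
        = ((2:ℝ)^γ * (c * ((4:ℝ)^α / α))) * ‖x‖ ^ (-(γ+α)) := by
      calc (‖x‖/2) ^ (-γ) * (c * ((‖x‖/4) ^ (-α) / α))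
          = ((2:ℝ)^γ * (c * ((4:ℝ)^α / α))) * (‖x‖ ^ (-γ) * ‖x‖ ^ (-α)) := by
            rw [e3, e4]; ring
        _ = _ := by rw [e6]
    have hxp : (0:ℝ) ≤ ‖x‖ ^ (-(γ+α)) := Real.rpow_nonneg hR0.le _
    rw [ht2] at hmain
    linarith
  · -- case γ > d
    have hinteg : Integrable (fun y : EuclideanSpace ℝ (Fin d) => (1 + ‖y‖) ^ (-γ)) volume := by
      apply integrable_one_add_norm (E := EuclideanSpace ℝ (Fin d))
      rwa [finrank_euclideanSpace_fin]
    set K : ℝ := ∫ y : EuclideanSpace ℝ (Fin d), (1 + ‖y‖) ^ (-γ) ∂volume with hK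
    have hK0 : 0 ≤ K := integral_nonneg fun y => Real.rpow_nonneg (by positivity) _
    refine ⟨(4:ℝ)^((d:ℝ)+α) * K + (2:ℝ)^γ * (c * ((4:ℝ)^α / α)) + 1, ?_, ?_⟩
    · have : (0:ℝ) ≤ (4:ℝ)^((d:ℝ)+α) * K := by positivity
      linarith
    intro x hx
    have hR0 : (0:ℝ) < ‖x‖ := lt_of_lt_of_le one_pos hx
    have hmin : min (γ + α) ((d:ℝ) + α) = (d:ℝ) + α := min_eq_right (by linarith)
    rw [hmin]
    have hmain := aux_main d hd α hα0 γ hγ x hx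
    rw [← hc] at hmain
    have hball : (∫ y in closedBall (0 : EuclideanSpace ℝ (Fin d)) (‖x‖/2),
        (1 + ‖y‖) ^ (-γ) ∂volume) ≤ K :=
      setIntegral_le_integral hinteg
        (Filter.Eventually.of_forall fun y => Real.rpow_nonneg (by positivity) _)
    have e1 : (‖x‖/4) ^ (-(d:ℝ)-α) = (4:ℝ)^((d:ℝ)+α) * ‖x‖ ^ (-(d:ℝ)-α) := by
      rw [Real.div_rpow hR0.le (by norm_num), div_eq_mul_inv,
        ← Real.rpow_neg (by norm_num : (0:ℝ) ≤ 4), show -(-(d:ℝ)-α) = (d:ℝ)+α by ring, mul_comm]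
    have e3 : (‖x‖/2) ^ (-γ) = (2:ℝ)^γ * ‖x‖ ^ (-γ) := by
      rw [Real.div_rpow hR0.le (by norm_num), div_eq_mul_inv,
        ← Real.rpow_neg (by norm_num : (0:ℝ) ≤ 2), show -(-γ) = γ by ring, mul_comm]
    have e4 : (‖x‖/4) ^ (-α) = (4:ℝ)^α * ‖x‖ ^ (-α) := by
      rw [Real.div_rpow hR0.le (by norm_num), div_eq_mul_inv,
        ← Real.rpow_neg (by norm_num : (0:ℝ) ≤ 4), show -(-α) = α by ring, mul_comm]
    have e6 : ‖x‖ ^ (-γ) * ‖x‖ ^ (-α) = ‖x‖ ^ (-(γ+α)) := by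
      rw [← Real.rpow_add hR0]; congr 1; ring
    have hxp : (0:ℝ) ≤ ‖x‖ ^ (-((d:ℝ)+α)) := Real.rpow_nonneg hR0.le _
    have hmono : ‖x‖ ^ (-(γ+α)) ≤ ‖x‖ ^ (-((d:ℝ)+α)) :=
      Real.rpow_le_rpow_of_exponent_le hx (by linarith)
    have ht1 : (‖x‖/4) ^ (-(d:ℝ)-α) *
        (∫ y in closedBall (0 : EuclideanSpace ℝ (Fin d)) (‖x‖/2), (1 + ‖y‖) ^ (-γ) ∂volume)
        ≤ ((4:ℝ)^((d:ℝ)+α) * K) * ‖x‖ ^ (-((d:ℝ)+α)) := by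
      calc (‖x‖/4) ^ (-(d:ℝ)-α) *
            (∫ y in closedBall (0 : EuclideanSpace ℝ (Fin d)) (‖x‖/2), (1 + ‖y‖) ^ (-γ) ∂volume)
          ≤ (‖x‖/4) ^ (-(d:ℝ)-α) * K :=
            mul_le_mul_of_nonneg_left hball (Real.rpow_nonneg (by positivity) _)
        _ = ((4:ℝ)^((d:ℝ)+α) * K) * ‖x‖ ^ (-(d:ℝ)-α) := by rw [e1]; ring
        _ = ((4:ℝ)^((d:ℝ)+α) * K) * ‖x‖ ^ (-((d:ℝ)+α)) := by
            congr 2; ring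
    have ht2 : (‖x‖/2) ^ (-γ) * (c * ((‖x‖/4) ^ (-α) / α))
        ≤ ((2:ℝ)^γ * (c * ((4:ℝ)^α / α))) * ‖x‖ ^ (-((d:ℝ)+α)) := by
      have : (‖x‖/2) ^ (-γ) * (c * ((‖x‖/4) ^ (-α) / α))
          = ((2:ℝ)^γ * (c * ((4:ℝ)^α / α))) * ‖x‖ ^ (-(γ+α)) := by
        calc (‖x‖/2) ^ (-γ) * (c * ((‖x‖/4) ^ (-α) / α))
            = ((2:ℝ)^γ * (c * ((4:ℝ)^α / α))) * (‖x‖ ^ (-γ) * ‖x‖ ^ (-α)) := by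
              rw [e3, e4]; ring
          _ = _ := by rw [e6]
      rw [this]
      exact mul_le_mul_of_nonneg_left hmono hC2
    have hsum : ((4:ℝ)^((d:ℝ)+α) * K + (2:ℝ)^γ * (c * ((4:ℝ)^α / α)) + 1) * ‖x‖ ^ (-((d:ℝ)+α))
        = (4:ℝ)^((d:ℝ)+α) * K * ‖x‖ ^ (-((d:ℝ)+α))
          + (2:ℝ)^γ * (c * ((4:ℝ)^α / α)) * ‖x‖ ^ (-((d:ℝ)+α)) + ‖x‖ ^ (-((d:ℝ)+α)) := by ring
    linarith
end

section
/- Let d ≥ 1 be an integer and α ∈ (0,2). Let v : ℝ^d → [0,∞) be bounded with v(x) → 0 as |x| → ∞, and let f : ℝ^d → [0,∞) be bounded and measurable. Assume there is a constant C₁ > 0 such that for all x with |x| ≥ 3, f(x) ≤ C₁ v(x) ( sup_{y ∈ B(x,|x|/2)} f(y) + ∫_{B(x,|x|/2)^c} f(z) |z − x|^{−d−α} dz ). Let γ ≥ 0 with γ ≠ d, and suppose there is C₂ > 0 with f(x) ≤ C₂ (1 + |x|)^{−γ} for all x ∈ ℝ^d. Then there exists C₃ > 0 such that f(x) ≤ C₃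 (1 + |x|)^{−γ'} for all x ∈ ℝ^d, where γ' = min(γ + α, d + α). -/
open MeasureTheory Filter Metric Set

lemma aux_compl (d : ℕ) (hd : 1 ≤ d) (α : ℝ) (hα : 0 < α) (r : ℝ) (hr : 0 < r) :
    IntegrableOn (fun y : EuclideanSpace ℝ (Fin d) => ‖y‖ ^ (-(d : ℝ) - α))
      (ball (0 : EuclideanSpace ℝ (Fin d)) r)ᶜ volume ∧
    ∫ y in (ball (0 : EuclideanSpace ℝ (Fin d)) r)ᶜ, ‖y‖ ^ (-(d : ℝ) - α) ∂volume =
      ((d : ℝ) * (volume (ball (0 : EuclideanSpace ℝ (Fin d)) 1)).toReal) * (r ^ (-α) / α) := by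
  haveI : Nonempty (Fin d) := ⟨⟨0, hd⟩⟩
  set E := EuclideanSpace ℝ (Fin d)
  set p : ℝ := -(d : ℝ) - α with hp
  have hp0 : p < 0 := by
    have : (0:ℝ) ≤ d := Nat.cast_nonneg d
    simp only [hp]; linarith
  have hdα : (Module.finrank ℝ E : ℝ) < (d : ℝ) + α := by
    rw [finrank_euclideanSpace_fin]; linarith
  have hmono : ∀ y : E, r ≤ ‖y‖ →
      ‖y‖ ^ p ≤ (r / (1 + r)) ^ p * (1 + ‖y‖) ^ (-((d : ℝ) + α)) := by
    intro y hy
    have hy0 : 0 < ‖y‖ := lt_of_lt_of_le hr hy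
    have h0 : 0 < r / (1 + r) := by positivity
    have h1 : r / (1 + r) * (1 + ‖y‖) ≤ ‖y‖ := by
      rw [div_mul_eq_mul_div, div_le_iff₀ (by linarith)]
      nlinarith [norm_nonneg y]
    calc ‖y‖ ^ p ≤ (r / (1 + r) * (1 + ‖y‖)) ^ p :=
          Real.rpow_le_rpow_of_nonpos (by positivity) h1 hp0.le
      _ = (r / (1 + r)) ^ p * (1 + ‖y‖) ^ p := Real.mul_rpow h0.le (by positivity)
      _ = (r / (1 + r)) ^ p * (1 + ‖y‖) ^ (-((d : ℝ) + α)) := by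
          rw [show p = -((d : ℝ) + α) by rw [hp]; ring]
  have hintfull : Integrable (fun y : E => (r / (1 + r)) ^ p * (1 + ‖y‖) ^ (-((d : ℝ) + α)))
      volume := (integrable_one_add_norm hdα).const_mul _
  have hmemball : ∀ y : E, y ∈ (ball (0 : E) r)ᶜ ↔ r ≤ ‖y‖ := by
    intro y; simp [mem_ball_zero_iff, not_lt]
  constructor
  · refine Integrable.mono' hintfull.integrableOn ?_ ?_
    · exact (Measurable.aestronglyMeasurable (by fun_prop))
    · filter_upwards [ae_restrict_mem measurableSet_ball.compl] with y hy
      rw [Real.norm_eq_abs, abs_of_nonneg (Real.rpow_nonneg (norm_nonneg _) _)]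
      exact hmono y ((hmemball y).1 hy)
  · have hkey : (fun y : E => Set.indicator (ball (0 : E) r)ᶜ (fun y => ‖y‖ ^ p) y) =
        fun y : E => Set.indicator (Ici r) (fun t => t ^ p) ‖y‖ := by
      funext y
      by_cases h : r ≤ ‖y‖ <;> simp [Set.indicator_apply, hmemball y, h]
    calc ∫ y in (ball (0 : E) r)ᶜ, ‖y‖ ^ p ∂volume
        = ∫ y : E, Set.indicator (ball (0 : E) r)ᶜ (fun y => ‖y‖ ^ p) y ∂volume :=
          (integral_indicator measurableSet_ball.compl).symm
      _ = ∫ y : E, Set.indicator (Ici r) (fun t => t ^ p) ‖y‖ ∂volume := by rw [hkey]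
      _ = (Module.finrank ℝ E) • (volume (ball (0 : E) 1)).toReal •
            ∫ t in Ioi (0:ℝ), t ^ (Module.finrank ℝ E - 1) •
              Set.indicator (Ici r) (fun t => t ^ p) t :=
          integral_fun_norm_addHaar volume _
      _ = ((d : ℝ) * (volume (ball (0 : E) 1)).toReal) * (r ^ (-α) / α) := by
          have hinner : ∫ t in Ioi (0:ℝ), t ^ (Module.finrank ℝ E - 1) •
              Set.indicator (Ici r) (fun t => t ^ p) t = r ^ (-α) / α := by
            have h1 : ∀ t : ℝ, t ^ (Module.finrank ℝ E - 1) •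
                Set.indicator (Ici r) (fun t => t ^ p) t =
                Set.indicator (Ici r) (fun t => t ^ (Module.finrank ℝ E - 1) * t ^ p) t := by
              intro t
              simp only [Set.indicator_apply]
              split_ifs <;> simp
            simp_rw [h1]
            have hsub : Ici r ⊆ Ioi (0:ℝ) := fun t ht => lt_of_lt_of_le hr ht
            rw [setIntegral_indicator measurableSet_Ici,
              Set.inter_eq_self_of_subset_right hsub, integral_Ici_eq_integral_Ioi]
            have h2 : ∀ t ∈ Ioi r, t ^ (Module.finrank ℝ E - 1) * t ^ p = t ^ (-1 - α) := by
              intro t ht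
              have ht0 : 0 < t := lt_trans hr ht
              rw [← Real.rpow_natCast t (Module.finrank ℝ E - 1), ← Real.rpow_add ht0]
              congr 1
              rw [finrank_euclideanSpace_fin, Nat.cast_sub hd, Nat.cast_one, hp]
              ring
            rw [setIntegral_congr_fun measurableSet_Ioi h2,
              integral_Ioi_rpow_of_lt (by linarith) hr]
            rw [show (-1 : ℝ) - α + 1 = -α by ring]
            field_simp
          rw [hinner, nsmul_eq_mul, smul_eq_mul, finrank_euclideanSpace_fin]
          ring

lemma aux_ball (d : ℕ) (hd : 1 ≤ d) (γ s : ℝ) (hγ : 0 ≤ γ) (hγd : γ < d) (hs : 0 < s) :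
    ∫ z in closedBall (0 : EuclideanSpace ℝ (Fin d)) s, (1 + ‖z‖) ^ (-γ) ∂volume ≤
      ((d : ℝ) * (volume (ball (0 : EuclideanSpace ℝ (Fin d)) 1)).toReal) *
        (s ^ ((d : ℝ) - γ) / ((d : ℝ) - γ)) := by
  haveI : Nonempty (Fin d) := ⟨⟨0, hd⟩⟩
  set E := EuclideanSpace ℝ (Fin d)
  have hmem : ∀ z : E, z ∈ closedBall (0 : E) s ↔ ‖z‖ ∈ Icc 0 s := by
    intro z; simp [mem_closedBall_zero_iff, norm_nonneg]
  have hkey : (fun z : E => Set.indicator (closedBall (0 : E) s) (fun z => (1 + ‖z‖) ^ (-γ)) z) =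
      fun z : E => Set.indicator (Icc 0 s) (fun t => (1 + t) ^ (-γ)) ‖z‖ := by
    funext z
    by_cases h : ‖z‖ ∈ Icc (0:ℝ) s <;> simp [Set.indicator_apply, hmem z, h]
  have h0 : ∫ z in closedBall (0 : E) s, (1 + ‖z‖) ^ (-γ) ∂volume =
      (Module.finrank ℝ E) • (volume (ball (0 : E) 1)).toReal •
        ∫ t in Ioi (0:ℝ), t ^ (Module.finrank ℝ E - 1) •
          Set.indicator (Icc 0 s) (fun t => (1 + t) ^ (-γ)) t := by
    rw [← integral_indicator measurableSet_closedBall, hkey]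
    exact integral_fun_norm_addHaar volume _
  have h1d : (1:ℝ) ≤ d := by exact_mod_cast hd
  rw [h0, nsmul_eq_mul, smul_eq_mul, finrank_euclideanSpace_fin, ← mul_assoc]
  have hvol0 : (0:ℝ) ≤ (d : ℝ) * (volume (ball (0 : E) 1)).toReal := by positivity
  refine mul_le_mul_of_nonneg_left ?_ hvol0
  -- inner one-dimensional integral estimate
  have h1 : ∀ t : ℝ, t ^ (d - 1) • Set.indicator (Icc 0 s) (fun t => (1 + t) ^ (-γ)) t =
      Set.indicator (Icc 0 s) (fun t => t ^ (d - 1) * (1 + t) ^ (-γ)) t := by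
    intro t
    simp only [Set.indicator_apply]
    split_ifs <;> simp
  simp_rw [h1]
  have hsub : Ioi (0:ℝ) ∩ Icc 0 s = Ioc 0 s := by
    ext t; simp only [Set.mem_inter_iff, mem_Ioi, mem_Icc, mem_Ioc]
    constructor
    · rintro ⟨h1, _, h3⟩; exact ⟨h1, h3⟩
    · rintro ⟨h1, h2⟩; exact ⟨h1, le_of_lt h1, h2⟩
  rw [setIntegral_indicator measurableSet_Icc, hsub]
  have hintg : IntegrableOn (fun t : ℝ => t ^ ((d:ℝ) - 1 - γ)) (Ioc 0 s) volume := by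
    rw [← intervalIntegrable_iff_integrableOn_Ioc_of_le hs.le]
    apply intervalIntegral.intervalIntegrable_rpow'
    linarith
  have hintf : IntegrableOn (fun t : ℝ => t ^ (d - 1) * (1 + t) ^ (-γ)) (Ioc 0 s) volume := by
    apply Measure.integrableOn_of_bounded (M := (max s 1) ^ (d - 1))
    · exact ((measure_Ioc_lt_top).ne)
    · exact Measurable.aestronglyMeasurable (by fun_prop)
    · filter_upwards [ae_restrict_mem measurableSet_Ioc] with t ht
      have ht0 := ht.1.le
      rw [Real.norm_eq_abs, abs_of_nonneg
        (mul_nonneg (pow_nonneg ht0 _) (Real.rpow_nonneg (by linarith) _))]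
      have h2 : t ^ (d - 1) ≤ (max s 1) ^ (d - 1) :=
        pow_le_pow_left₀ ht.1.le (le_trans ht.2 (le_max_left s 1)) _
      have h3 : (1 + t) ^ (-γ) ≤ 1 :=
        Real.rpow_le_one_of_one_le_of_nonpos (by linarith [ht.1.le]) (by linarith)
      calc t ^ (d - 1) * (1 + t) ^ (-γ) ≤ (max s 1) ^ (d - 1) * 1 :=
            mul_le_mul h2 h3 (Real.rpow_nonneg (by linarith) _) (by positivity)
        _ = (max s 1) ^ (d - 1) := mul_one _
  have hptwise : ∀ t ∈ Ioc (0:ℝ) s, t ^ (d - 1) * (1 + t) ^ (-γ) ≤ t ^ ((d:ℝ) - 1 - γ) := by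
    intro t ht
    have ht0 : 0 < t := ht.1
    have h2 : (1 + t) ^ (-γ) ≤ t ^ (-γ) :=
      Real.rpow_le_rpow_of_nonpos ht0 (by linarith) (by linarith)
    calc t ^ (d - 1) * (1 + t) ^ (-γ) ≤ t ^ (d - 1) * t ^ (-γ) :=
          mul_le_mul_of_nonneg_left h2 (pow_nonneg ht0.le _)
      _ = t ^ ((d:ℝ) - 1 - γ) := by
          rw [← Real.rpow_natCast t (d - 1), ← Real.rpow_add ht0]
          congr 1
          rw [Nat.cast_sub hd, Nat.cast_one]
          ring
  calc ∫ t in Ioc (0:ℝ) s, t ^ (d - 1) * (1 + t) ^ (-γ)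
      ≤ ∫ t in Ioc (0:ℝ) s, t ^ ((d:ℝ) - 1 - γ) :=
        setIntegral_mono_on hintf hintg measurableSet_Ioc hptwise
    _ = s ^ ((d:ℝ) - γ) / ((d:ℝ) - γ) := by
        rw [← intervalIntegral.integral_of_le hs.le,
          integral_rpow (Or.inl (by linarith))]
        rw [show (d:ℝ) - 1 - γ + 1 = (d:ℝ) - γ by ring,
          Real.zero_rpow (by linarith : (d:ℝ) - γ ≠ 0)]
        ring

lemma aux_dom {r t : ℝ} (hr : 0 < r) (ht : r ≤ t) {δ : ℝ} (hδ : δ ≤ 0) :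
    t ^ δ ≤ (r / (1 + r)) ^ δ * (1 + t) ^ δ := by
  have ht0 : 0 < t := lt_of_lt_of_le hr ht
  have h0 : 0 < r / (1 + r) := by positivity
  have h1 : r / (1 + r) * (1 + t) ≤ t := by
    rw [div_mul_eq_mul_div, div_le_iff₀ (by linarith)]
    nlinarith
  calc t ^ δ ≤ (r / (1 + r) * (1 + t)) ^ δ :=
        Real.rpow_le_rpow_of_nonpos (by positivity) h1 hδ
    _ = (r / (1 + r)) ^ δ * (1 + t) ^ δ := Real.mul_rpow h0.le (by linarith)

set_option maxHeartbeats 1600000 in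
/-- One-step decay improvement inside the proof of Lemma 2.4: if a bounded nonnegative
measurable `f` satisfies the recursive inequality driven by a bounded function `v`
vanishing at infinity, then a decay rate `(1+|x|)^{-γ}` improves to
`(1+|x|)^{-γ'}` with `γ' = min (γ + α) (d + α)`. -/
theorem stmt_1 (d : ℕ) (hd : 1 ≤ d) (α : ℝ) (hα : α ∈ Set.Ioo (0 : ℝ) 2)
    (v f : EuclideanSpace ℝ (Fin d) → ℝ)
    (hv_nonneg : ∀ x, 0 ≤ v x) (hv_bdd : ∃ M : ℝ, ∀ x, v x ≤ M)
    (hv_lim : Tendsto v (cocompact (EuclideanSpace ℝ (Fin d))) (nhds 0))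
    (hf_nonneg : ∀ x, 0 ≤ f x) (hf_bdd : ∃ M : ℝ, ∀ x, f x ≤ M)
    (hf_meas : Measurable f)
    (C₁ : ℝ) (hC₁ : 0 < C₁)
    (hrec : ∀ x : EuclideanSpace ℝ (Fin d), 3 ≤ ‖x‖ →
      f x ≤ C₁ * v x * (sSup (f '' Metric.ball x (‖x‖ / 2)) +
        ∫ z in (Metric.ball x (‖x‖ / 2))ᶜ, f z * ‖z - x‖ ^ (-(d : ℝ) - α) ∂volume))
    (γ : ℝ) (hγ : 0 ≤ γ) (hγd : γ ≠ (d : ℝ))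
    (C₂ : ℝ) (hC₂ : 0 < C₂) (hdecay : ∀ x, f x ≤ C₂ * (1 + ‖x‖) ^ (-γ)) :
    ∃ C₃ : ℝ, 0 < C₃ ∧ ∀ x,
      f x ≤ C₃ * (1 + ‖x‖) ^ (-(min (γ + α) ((d : ℝ) + α))) := by
  obtain ⟨hα0, -⟩ := hα
  obtain ⟨M, hM⟩ := hf_bdd
  obtain ⟨Mf, hMf0, hfM⟩ : ∃ Mf : ℝ, 0 ≤ Mf ∧ ∀ x, f x ≤ Mf :=
    ⟨max M 0, le_max_right _ _, fun x => le_trans (hM x) (le_max_left _ _)⟩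
  have hd1 : (1 : ℝ) ≤ (d : ℝ) := by exact_mod_cast hd
  set γ' : ℝ := min (γ + α) ((d : ℝ) + α) with hγ'def
  have hγ'pos : 0 < γ' := lt_min (by linarith) (by linarith)
  have hγ'1 : γ' ≤ γ + α := min_le_left _ _
  have hγ'2 : γ' ≤ (d : ℝ) + α := min_le_right _ _
  -- the integral decay estimate
  have hIbound : ∃ K : ℝ, 0 ≤ K ∧ ∀ x : EuclideanSpace ℝ (Fin d), 3 ≤ ‖x‖ →
      (∫ z in (Metric.ball x (‖x‖ / 2))ᶜ, f z * ‖z - x‖ ^ (-(d : ℝ) - α) ∂volume) ≤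
        K * (1 + ‖x‖) ^ (-γ') := by
    have hp0 : -(d : ℝ) - α < 0 := by linarith
    have hdα : (Module.finrank ℝ (EuclideanSpace ℝ (Fin d)) : ℝ) < (d : ℝ) + α := by
      rw [finrank_euclideanSpace_fin]; linarith
    set cvol : ℝ := (d : ℝ) * (volume (ball (0 : EuclideanSpace ℝ (Fin d)) 1)).toReal
      with hcvoldef
    have hcvol : 0 ≤ cvol := by positivity
    have hKfull0 : 0 ≤ ∫ z : EuclideanSpace ℝ (Fin d), (1 + ‖z‖) ^ (-γ) ∂volume :=
      integral_nonneg fun z => Real.rpow_nonneg (by positivity) _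
    set KA : ℝ := if γ < (d : ℝ) then
        C₂ * (9/16 : ℝ) ^ (-(d : ℝ) - α) * ((1/4 : ℝ) ^ ((d : ℝ) - γ) * (cvol / ((d : ℝ) - γ)))
      else C₂ * (9/16 : ℝ) ^ (-(d : ℝ) - α) *
        ∫ z : EuclideanSpace ℝ (Fin d), (1 + ‖z‖) ^ (-γ) ∂volume with hKAdef
    have hKA0 : 0 ≤ KA := by
      rw [hKAdef]; split_ifs with h
      · have hdγ : (0:ℝ) < (d : ℝ) - γ := by linarith
        positivity
      · positivity
    set KB : ℝ := C₂ * 4 ^ γ * (cvol * ((3/8 : ℝ) ^ (-α) / α)) with hKBdef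
    have hKB0 : 0 ≤ KB := by rw [hKBdef]; positivity
    refine ⟨KA + KB, by positivity, ?_⟩
    intro x hx3
    have hx0 : (0:ℝ) < ‖x‖ := by linarith
    have hbp : (0:ℝ) < 1 + ‖x‖ := by positivity
    have hb1 : (1:ℝ) ≤ 1 + ‖x‖ := by linarith
    have h34 : (3/4 : ℝ) * (1 + ‖x‖) ≤ ‖x‖ := by linarith
    have hr2 : (0:ℝ) < ‖x‖ / 2 := by linarith
    set A := closedBall (0 : EuclideanSpace ℝ (Fin d)) (‖x‖ / 4) with hAdef
    have hzxA : ∀ z ∈ A, 3 * ‖x‖ / 4 ≤ ‖z - x‖ := by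
      intro z hz
      have hz4 : ‖z‖ ≤ ‖x‖ / 4 := mem_closedBall_zero_iff.mp hz
      have h1 : ‖x‖ - ‖z‖ ≤ ‖x - z‖ := norm_sub_norm_le x z
      rw [norm_sub_rev x z] at h1
      linarith
    have hAsub : A ⊆ (ball x (‖x‖ / 2))ᶜ := by
      intro z hz
      have := hzxA z hz
      simp only [mem_compl_iff, mem_ball, not_lt, dist_eq_norm]
      linarith
    set Bs := (ball x (‖x‖ / 2))ᶜ \ A with hBsdef
    have hunion : (ball x (‖x‖ / 2))ᶜ = A ∪ Bs := (Set.union_diff_cancel hAsub).symm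
    have hABdisj : Disjoint A Bs := Set.disjoint_sdiff_right
    have hBmeas : MeasurableSet Bs := measurableSet_ball.compl.diff measurableSet_closedBall
    have hIA : IntegrableOn (fun z => f z * ‖z - x‖ ^ (-(d : ℝ) - α)) A volume := by
      apply Measure.integrableOn_of_bounded (M := Mf * (3 * ‖x‖ / 4) ^ (-(d : ℝ) - α))
      · exact measure_closedBall_lt_top.ne
      · exact Measurable.aestronglyMeasurable (by fun_prop)
      · filter_upwards [ae_restrict_mem measurableSet_closedBall] with z hz
        rw [Real.norm_eq_abs, abs_of_nonneg
          (mul_nonneg (hf_nonneg z) (Real.rpow_nonneg (norm_nonneg _) _))]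
        exact mul_le_mul (hfM z)
          (Real.rpow_le_rpow_of_nonpos (by linarith) (hzxA z hz) hp0.le)
          (Real.rpow_nonneg (norm_nonneg _) _) hMf0
    have hg0 : IntegrableOn (fun z => ‖z - x‖ ^ (-(d : ℝ) - α)) (ball x (‖x‖ / 2))ᶜ volume := by
      have hfull : Integrable (fun z : EuclideanSpace ℝ (Fin d) =>
          ((‖x‖ / 2) / (1 + ‖x‖ / 2)) ^ (-(d : ℝ) - α) * (1 + ‖z - x‖) ^ (-((d : ℝ) + α)))
          volume :=
        ((integrable_one_add_norm hdα).comp_sub_right x).const_mul _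
      refine Integrable.mono' hfull.integrableOn
        (Measurable.aestronglyMeasurable (by fun_prop)) ?_
      filter_upwards [ae_restrict_mem measurableSet_ball.compl] with z hz
      have hzr : ‖x‖ / 2 ≤ ‖z - x‖ := by
        simp only [mem_compl_iff, mem_ball, not_lt, dist_eq_norm] at hz; exact hz
      rw [Real.norm_eq_abs, abs_of_nonneg (Real.rpow_nonneg (norm_nonneg _) _)]
      refine le_trans (aux_dom hr2 hzr hp0.le) (le_of_eq ?_)
      congr 1
      · congr 1; ring
    have hIBs : IntegrableOn (fun z => f z * ‖z - x‖ ^ (-(d : ℝ) - α)) Bs volume := by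
      refine Integrable.mono' (MeasureTheory.IntegrableOn.mono_set (hg0.const_mul Mf) diff_subset)
        (Measurable.aestronglyMeasurable (by fun_prop)) ?_
      refine Eventually.of_forall fun z => ?_
      rw [Real.norm_eq_abs, abs_of_nonneg
        (mul_nonneg (hf_nonneg z) (Real.rpow_nonneg (norm_nonneg _) _))]
      exact mul_le_mul_of_nonneg_right (hfM z) (Real.rpow_nonneg (norm_nonneg _) _)
    have hsplit : (∫ z in (ball x (‖x‖ / 2))ᶜ, f z * ‖z - x‖ ^ (-(d : ℝ) - α) ∂volume) =
        (∫ z in A, f z * ‖z - x‖ ^ (-(d : ℝ) - α) ∂volume) +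
          ∫ z in Bs, f z * ‖z - x‖ ^ (-(d : ℝ) - α) ∂volume := by
      rw [hunion]
      exact setIntegral_union hABdisj hBmeas hIA hIBs
    -- piece A
    have hptA : ∀ z ∈ A, f z * ‖z - x‖ ^ (-(d : ℝ) - α) ≤
        (C₂ * (3 * ‖x‖ / 4) ^ (-(d : ℝ) - α)) * (1 + ‖z‖) ^ (-γ) := by
      intro z hz
      have e2 : ‖z - x‖ ^ (-(d : ℝ) - α) ≤ (3 * ‖x‖ / 4) ^ (-(d : ℝ) - α) :=
        Real.rpow_le_rpow_of_nonpos (by linarith) (hzxA z hz) hp0.le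
      calc f z * ‖z - x‖ ^ (-(d : ℝ) - α)
          ≤ (C₂ * (1 + ‖z‖) ^ (-γ)) * ((3 * ‖x‖ / 4) ^ (-(d : ℝ) - α)) :=
            mul_le_mul (hdecay z) e2 (Real.rpow_nonneg (norm_nonneg _) _) (by positivity)
        _ = (C₂ * (3 * ‖x‖ / 4) ^ (-(d : ℝ) - α)) * (1 + ‖z‖) ^ (-γ) := by ring
    have hIA2 : IntegrableOn (fun z : EuclideanSpace ℝ (Fin d) => (1 + ‖z‖) ^ (-γ)) A volume := by
      apply Measure.integrableOn_of_bounded (M := 1)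
      · exact measure_closedBall_lt_top.ne
      · exact Measurable.aestronglyMeasurable (by fun_prop)
      · refine Eventually.of_forall fun z => ?_
        rw [Real.norm_eq_abs, abs_of_nonneg (Real.rpow_nonneg (by positivity) _)]
        exact Real.rpow_le_one_of_one_le_of_nonpos
          (by linarith [norm_nonneg z]) (by linarith)
    have hA_le : (∫ z in A, f z * ‖z - x‖ ^ (-(d : ℝ) - α) ∂volume) ≤
        (C₂ * (3 * ‖x‖ / 4) ^ (-(d : ℝ) - α)) * ∫ z in A, (1 + ‖z‖) ^ (-γ) ∂volume := by
      calc (∫ z in A, f z * ‖z - x‖ ^ (-(d : ℝ) - α) ∂volume)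
          ≤ ∫ z in A, (C₂ * (3 * ‖x‖ / 4) ^ (-(d : ℝ) - α)) * (1 + ‖z‖) ^ (-γ) ∂volume :=
            setIntegral_mono_on hIA (hIA2.const_mul _) measurableSet_closedBall hptA
        _ = _ := integral_const_mul _ _
    have h916 : (9/16 : ℝ) * (1 + ‖x‖) ≤ 3 * ‖x‖ / 4 := by linarith
    have e3 : (3 * ‖x‖ / 4 : ℝ) ^ (-(d : ℝ) - α) ≤
        (9/16 : ℝ) ^ (-(d : ℝ) - α) * (1 + ‖x‖) ^ (-(d : ℝ) - α) := by
      calc (3 * ‖x‖ / 4 : ℝ) ^ (-(d : ℝ) - α)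
          ≤ ((9/16 : ℝ) * (1 + ‖x‖)) ^ (-(d : ℝ) - α) :=
            Real.rpow_le_rpow_of_nonpos (by positivity) h916 hp0.le
        _ = _ := Real.mul_rpow (by norm_num) (by positivity)
    have hAfinal : (∫ z in A, f z * ‖z - x‖ ^ (-(d : ℝ) - α) ∂volume) ≤
        KA * (1 + ‖x‖) ^ (-γ') := by
      rcases lt_or_gt_of_ne hγd with hlt | hgt
      · have hdγ : (0:ℝ) < (d : ℝ) - γ := by linarith
        have hJA := aux_ball d hd γ (‖x‖ / 4) hγ hlt (by linarith)
        rw [← hcvoldef] at hJA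
        have e4 : (‖x‖ / 4 : ℝ) ^ ((d : ℝ) - γ) ≤
            (1/4 : ℝ) ^ ((d : ℝ) - γ) * (1 + ‖x‖) ^ ((d : ℝ) - γ) := by
          calc (‖x‖ / 4 : ℝ) ^ ((d : ℝ) - γ)
              ≤ ((1/4 : ℝ) * (1 + ‖x‖)) ^ ((d : ℝ) - γ) :=
                Real.rpow_le_rpow (by positivity) (by linarith) hdγ.le
            _ = _ := Real.mul_rpow (by norm_num) (by positivity)
        calc (∫ z in A, f z * ‖z - x‖ ^ (-(d : ℝ) - α) ∂volume)
            ≤ (C₂ * (3 * ‖x‖ / 4) ^ (-(d : ℝ) - α)) * ∫ z in A, (1 + ‖z‖) ^ (-γ) ∂volume :=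
              hA_le
          _ ≤ (C₂ * (3 * ‖x‖ / 4) ^ (-(d : ℝ) - α)) *
              (cvol * ((‖x‖ / 4) ^ ((d : ℝ) - γ) / ((d : ℝ) - γ))) :=
              mul_le_mul_of_nonneg_left hJA (by positivity)
          _ ≤ (C₂ * ((9/16 : ℝ) ^ (-(d : ℝ) - α) * (1 + ‖x‖) ^ (-(d : ℝ) - α))) *
              (cvol * (((1/4 : ℝ) ^ ((d : ℝ) - γ) * (1 + ‖x‖) ^ ((d : ℝ) - γ)) /
                ((d : ℝ) - γ))) := by
              apply mul_le_mul
              · exact mul_le_mul_of_nonneg_left e3 hC₂.le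
              · refine mul_le_mul_of_nonneg_left ?_ hcvol
                rw [div_eq_mul_inv, div_eq_mul_inv]
                exact mul_le_mul_of_nonneg_right e4 (by positivity)
              · exact mul_nonneg hcvol (div_nonneg (Real.rpow_nonneg (by positivity) _) hdγ.le)
              · positivity
          _ = (C₂ * (9/16 : ℝ) ^ (-(d : ℝ) - α) *
                ((1/4 : ℝ) ^ ((d : ℝ) - γ) * (cvol / ((d : ℝ) - γ)))) *
              ((1 + ‖x‖) ^ (-(d : ℝ) - α) * (1 + ‖x‖) ^ ((d : ℝ) - γ)) := by ring
          _ = KA * (1 + ‖x‖) ^ (-(d : ℝ) - α + ((d : ℝ) - γ)) := by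
              rw [← Real.rpow_add hbp, hKAdef, if_pos hlt]
          _ ≤ KA * (1 + ‖x‖) ^ (-γ') := by
              refine mul_le_mul_of_nonneg_left ?_ hKA0
              exact Real.rpow_le_rpow_of_exponent_le hb1 (by linarith [hγ'1])
      · have hfull : Integrable (fun z : EuclideanSpace ℝ (Fin d) => (1 + ‖z‖) ^ (-γ))
            volume := integrable_one_add_norm (by rw [finrank_euclideanSpace_fin]; exact hgt)
        have hJA : (∫ z in A, (1 + ‖z‖) ^ (-γ) ∂volume) ≤
            ∫ z : EuclideanSpace ℝ (Fin d), (1 + ‖z‖) ^ (-γ) ∂volume :=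
          setIntegral_le_integral hfull
            (Eventually.of_forall fun z => Real.rpow_nonneg (by positivity) _)
        calc (∫ z in A, f z * ‖z - x‖ ^ (-(d : ℝ) - α) ∂volume)
            ≤ (C₂ * (3 * ‖x‖ / 4) ^ (-(d : ℝ) - α)) * ∫ z in A, (1 + ‖z‖) ^ (-γ) ∂volume :=
              hA_le
          _ ≤ (C₂ * (3 * ‖x‖ / 4) ^ (-(d : ℝ) - α)) *
              ∫ z : EuclideanSpace ℝ (Fin d), (1 + ‖z‖) ^ (-γ) ∂volume :=
              mul_le_mul_of_nonneg_left hJA (by positivity)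
          _ ≤ (C₂ * ((9/16 : ℝ) ^ (-(d : ℝ) - α) * (1 + ‖x‖) ^ (-(d : ℝ) - α))) *
              ∫ z : EuclideanSpace ℝ (Fin d), (1 + ‖z‖) ^ (-γ) ∂volume :=
              mul_le_mul_of_nonneg_right (mul_le_mul_of_nonneg_left e3 hC₂.le) hKfull0
          _ = (C₂ * (9/16 : ℝ) ^ (-(d : ℝ) - α) *
                ∫ z : EuclideanSpace ℝ (Fin d), (1 + ‖z‖) ^ (-γ) ∂volume) *
              (1 + ‖x‖) ^ (-(d : ℝ) - α) := by ring
          _ = KA * (1 + ‖x‖) ^ (-(d : ℝ) - α) := by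
              rw [hKAdef, if_neg (not_lt.mpr hgt.le)]
          _ ≤ KA * (1 + ‖x‖) ^ (-γ') := by
              refine mul_le_mul_of_nonneg_left ?_ hKA0
              exact Real.rpow_le_rpow_of_exponent_le hb1 (by linarith [hγ'2])
    -- piece B
    have hptB : ∀ z ∈ Bs, f z * ‖z - x‖ ^ (-(d : ℝ) - α) ≤
        (C₂ * 4 ^ γ * (1 + ‖x‖) ^ (-γ)) * ‖z - x‖ ^ (-(d : ℝ) - α) := by
      intro z hz
      have hz4 : ‖x‖ / 4 < ‖z‖ := by
        have hnot : ¬ ‖z‖ ≤ ‖x‖ / 4 := fun h => hz.2 (mem_closedBall_zero_iff.mpr h)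
        exact not_le.mp hnot
      have h14 : (1 + ‖x‖) / 4 ≤ 1 + ‖z‖ := by linarith
      have e1 : (1 + ‖z‖) ^ (-γ) ≤ ((1 + ‖x‖) / 4) ^ (-γ) :=
        Real.rpow_le_rpow_of_nonpos (by positivity) h14 (by linarith)
      have e2 : ((1 + ‖x‖) / 4 : ℝ) ^ (-γ) = 4 ^ γ * (1 + ‖x‖) ^ (-γ) := by
        rw [div_eq_mul_inv, Real.mul_rpow hbp.le (by norm_num),
          Real.inv_rpow (by norm_num), ← Real.rpow_neg (by norm_num), neg_neg, mul_comm]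
      calc f z * ‖z - x‖ ^ (-(d : ℝ) - α)
          ≤ (C₂ * (1 + ‖z‖) ^ (-γ)) * ‖z - x‖ ^ (-(d : ℝ) - α) :=
            mul_le_mul_of_nonneg_right (hdecay z) (Real.rpow_nonneg (norm_nonneg _) _)
        _ ≤ (C₂ * (4 ^ γ * (1 + ‖x‖) ^ (-γ))) * ‖z - x‖ ^ (-(d : ℝ) - α) := by
            refine mul_le_mul_of_nonneg_right ?_ (Real.rpow_nonneg (norm_nonneg _) _)
            exact mul_le_mul_of_nonneg_left (e1.trans_eq e2) hC₂.le
        _ = (C₂ * 4 ^ γ * (1 + ‖x‖) ^ (-γ)) * ‖z - x‖ ^ (-(d : ℝ) - α) := by ring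
    have hIB2 : IntegrableOn
        (fun z => (C₂ * 4 ^ γ * (1 + ‖x‖) ^ (-γ)) * ‖z - x‖ ^ (-(d : ℝ) - α)) Bs volume :=
      MeasureTheory.IntegrableOn.mono_set (hg0.const_mul _) diff_subset
    have htrans : (∫ z in (ball x (‖x‖ / 2))ᶜ, ‖z - x‖ ^ (-(d : ℝ) - α) ∂volume) =
        cvol * ((‖x‖ / 2) ^ (-α) / α) := by
      have h1 : ∀ z : EuclideanSpace ℝ (Fin d),
          Set.indicator ((ball x (‖x‖ / 2))ᶜ) (fun z => ‖z - x‖ ^ (-(d : ℝ) - α)) z =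
          Set.indicator ((ball (0 : EuclideanSpace ℝ (Fin d)) (‖x‖ / 2))ᶜ)
            (fun y => ‖y‖ ^ (-(d : ℝ) - α)) (z - x) := by
        intro z
        have hiff : z - x ∈ (ball (0 : EuclideanSpace ℝ (Fin d)) (‖x‖ / 2))ᶜ ↔
            z ∈ (ball x (‖x‖ / 2))ᶜ := by
          simp [mem_ball_zero_iff, mem_ball, dist_eq_norm, not_lt]
        by_cases h : z ∈ (ball x (‖x‖ / 2))ᶜ
        · rw [Set.indicator_of_mem h, Set.indicator_of_mem (hiff.mpr h)]
        · rw [Set.indicator_of_notMem h,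
            Set.indicator_of_notMem (fun hc => h (hiff.mp hc))]
      rw [← integral_indicator measurableSet_ball.compl]
      simp_rw [h1]
      rw [integral_sub_right_eq_self (Set.indicator
        ((ball (0 : EuclideanSpace ℝ (Fin d)) (‖x‖ / 2))ᶜ)
        fun y => ‖y‖ ^ (-(d : ℝ) - α)) x]
      rw [integral_indicator measurableSet_ball.compl,
        (aux_compl d hd α hα0 (‖x‖ / 2) hr2).2, hcvoldef]
    have hBfinal : (∫ z in Bs, f z * ‖z - x‖ ^ (-(d : ℝ) - α) ∂volume) ≤
        KB * (1 + ‖x‖) ^ (-γ') := by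
      have h38 : (3/8 : ℝ) * (1 + ‖x‖) ≤ ‖x‖ / 2 := by linarith
      have e5 : (‖x‖ / 2 : ℝ) ^ (-α) ≤ (3/8 : ℝ) ^ (-α) * (1 + ‖x‖) ^ (-α) := by
        calc (‖x‖ / 2 : ℝ) ^ (-α) ≤ ((3/8 : ℝ) * (1 + ‖x‖)) ^ (-α) :=
              Real.rpow_le_rpow_of_nonpos (by positivity) h38 (by linarith)
          _ = _ := Real.mul_rpow (by norm_num) (by positivity)
      calc (∫ z in Bs, f z * ‖z - x‖ ^ (-(d : ℝ) - α) ∂volume)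
          ≤ ∫ z in Bs, (C₂ * 4 ^ γ * (1 + ‖x‖) ^ (-γ)) * ‖z - x‖ ^ (-(d : ℝ) - α) ∂volume :=
            setIntegral_mono_on hIBs hIB2 hBmeas hptB
        _ = (C₂ * 4 ^ γ * (1 + ‖x‖) ^ (-γ)) *
            ∫ z in Bs, ‖z - x‖ ^ (-(d : ℝ) - α) ∂volume := integral_const_mul _ _
        _ ≤ (C₂ * 4 ^ γ * (1 + ‖x‖) ^ (-γ)) *
            ∫ z in (ball x (‖x‖ / 2))ᶜ, ‖z - x‖ ^ (-(d : ℝ) - α) ∂volume := by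
            refine mul_le_mul_of_nonneg_left ?_ (by positivity)
            exact setIntegral_mono_set hg0
              (Eventually.of_forall fun z => Real.rpow_nonneg (norm_nonneg _) _)
              (HasSubset.Subset.eventuallyLE diff_subset)
        _ = (C₂ * 4 ^ γ * (1 + ‖x‖) ^ (-γ)) * (cvol * ((‖x‖ / 2) ^ (-α) / α)) := by
            rw [htrans]
        _ ≤ (C₂ * 4 ^ γ * (1 + ‖x‖) ^ (-γ)) *
            (cvol * (((3/8 : ℝ) ^ (-α) * (1 + ‖x‖) ^ (-α)) / α)) := by
            refine mul_le_mul_of_nonneg_left ?_ (by positivity)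
            refine mul_le_mul_of_nonneg_left ?_ hcvol
            rw [div_eq_mul_inv, div_eq_mul_inv]
            exact mul_le_mul_of_nonneg_right e5 (by positivity)
        _ = (C₂ * 4 ^ γ * (cvol * ((3/8 : ℝ) ^ (-α) / α))) *
            ((1 + ‖x‖) ^ (-γ) * (1 + ‖x‖) ^ (-α)) := by ring
        _ = KB * (1 + ‖x‖) ^ (-γ + -α) := by rw [← Real.rpow_add hbp, hKBdef]
        _ ≤ KB * (1 + ‖x‖) ^ (-γ') := by
            refine mul_le_mul_of_nonneg_left ?_ hKB0
            exact Real.rpow_le_rpow_of_exponent_le hb1 (by linarith [hγ'1])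
    calc (∫ z in (ball x (‖x‖ / 2))ᶜ, f z * ‖z - x‖ ^ (-(d : ℝ) - α) ∂volume)
        = (∫ z in A, f z * ‖z - x‖ ^ (-(d : ℝ) - α) ∂volume) +
          ∫ z in Bs, f z * ‖z - x‖ ^ (-(d : ℝ) - α) ∂volume := hsplit
      _ ≤ KA * (1 + ‖x‖) ^ (-γ') + KB * (1 + ‖x‖) ^ (-γ') := add_le_add hAfinal hBfinal
      _ = (KA + KB) * (1 + ‖x‖) ^ (-γ') := by ring
  -- the smallness of C₁ * v far away
  have hvsmall : ∀ θ : ℝ, 0 < θ → ∃ R : ℝ, 3 ≤ R ∧ ∀ x : EuclideanSpace ℝ (Fin d), R ≤ ‖x‖ → C₁ * v x ≤ θ := by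
    intro θ hθ
    have hev : ∀ᶠ x in cocompact (EuclideanSpace ℝ (Fin d)), dist (v x) 0 < θ / C₁ :=
      Metric.tendsto_nhds.mp hv_lim (θ / C₁) (by positivity)
    obtain ⟨K, hKcomp, hKs⟩ := mem_cocompact.mp hev
    obtain ⟨R₀, hR₀⟩ := hKcomp.isBounded.subset_closedBall 0
    refine ⟨max (R₀ + 1) 3, le_max_right _ _, fun x hx => ?_⟩
    have hxK : x ∉ K := by
      intro hxK
      have := hR₀ hxK
      rw [mem_closedBall_zero_iff] at this
      have := le_trans (le_max_left (R₀ + 1) 3) hx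
      linarith
    have hxs := hKs hxK
    rw [Set.mem_setOf_eq, dist_zero_right, Real.norm_eq_abs] at hxs
    have : v x < θ / C₁ := lt_of_le_of_lt (le_abs_self _) hxs
    rw [mul_comm]
    exact le_of_lt ((lt_div_iff₀ hC₁).mp this)
  -- bootstrap
  obtain ⟨K, hK0, hKb⟩ := hIbound
  set cstar : ℝ := (2 : ℝ) ^ γ' with hcstardef
  have hcstar1 : (1 : ℝ) ≤ cstar := Real.one_le_rpow one_le_two hγ'pos.le
  have hcstar0 : 0 < cstar := lt_of_lt_of_le one_pos hcstar1
  set θ : ℝ := 1 / (2 * cstar) with hθdef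
  have hθ0 : 0 < θ := by positivity
  have hθc : θ * cstar = 1 / 2 := by
    rw [hθdef]; field_simp
  obtain ⟨R, hR3, hRv⟩ := hvsmall θ hθ0
  set K'' : ℝ := Mf * (1 + R) ^ γ' with hK''def
  have hK''0 : 0 ≤ K'' := by positivity
  set C₀ : ℝ := max K'' (2 * θ * K) with hC₀def
  have hC₀0 : 0 ≤ C₀ := le_trans hK''0 (le_max_left _ _)
  have main : ∀ T : ℝ, 0 < T → ∀ x : EuclideanSpace ℝ (Fin d), f x * min ((1 + ‖x‖) ^ γ') T ≤ C₀ := by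
    intro T hT
    set w : EuclideanSpace ℝ (Fin d) → ℝ := fun x => min ((1 + ‖x‖) ^ γ') T with hwdef
    have hw0 : ∀ x, 0 < w x := fun x => lt_min (Real.rpow_pos_of_pos (by positivity) _) hT
    have hwle : ∀ x, w x ≤ (1 + ‖x‖) ^ γ' := fun x => min_le_left _ _
    have hwT : ∀ x, w x ≤ T := fun x => min_le_right _ _
    have hbdd : BddAbove (Set.range fun x => f x * w x) := by
      refine ⟨Mf * T, ?_⟩
      rintro _ ⟨x, rfl⟩
      exact mul_le_mul (hfM x) (hwT x) (hw0 x).le hMf0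
    set S := sSup (Set.range fun x => f x * w x) with hSdef
    have hSle : ∀ x, f x * w x ≤ S := fun x => le_csSup hbdd ⟨x, rfl⟩
    have key : ∀ x, f x * w x ≤ max K'' (S / 2 + θ * K) := by
      intro x
      by_cases hxR : R ≤ ‖x‖
      · have h3 : 3 ≤ ‖x‖ := le_trans hR3 hxR
        have hbp : (0 : ℝ) < 1 + ‖x‖ := by positivity
        have hwx := hw0 x
        have hrx := hrec x h3
        have hIx := hKb x h3
        set Sx := sSup (f '' Metric.ball x (‖x‖ / 2)) with hSxdef
        set I := ∫ z in (Metric.ball x (‖x‖ / 2))ᶜ, f z * ‖z - x‖ ^ (-(d : ℝ) - α) ∂volume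
          with hIdef
        have hballne : (Metric.ball x (‖x‖ / 2)).Nonempty := Metric.nonempty_ball.2 (by linarith)
        have himgne : (f '' Metric.ball x (‖x‖ / 2)).Nonempty := hballne.image f
        have himgbdd : BddAbove (f '' Metric.ball x (‖x‖ / 2)) := by
          refine ⟨Mf, ?_⟩; rintro _ ⟨y, _, rfl⟩; exact hfM y
        have hsup0 : 0 ≤ Sx := by
          obtain ⟨y, hy⟩ := hballne
          exact le_trans (hf_nonneg y) (le_csSup himgbdd ⟨y, hy, rfl⟩)
        have hsupw : Sx * w x ≤ cstar * S := by
          have hsup_le : Sx ≤ cstar * S / w x := by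
            apply csSup_le himgne
            rintro _ ⟨y, hy, rfl⟩
            rw [le_div_iff₀ hwx]
            have hyx : 1 + ‖x‖ ≤ 2 * (1 + ‖y‖) := by
              have h1 : ‖x‖ - ‖y‖ ≤ ‖x - y‖ := norm_sub_norm_le x y
              have h2 : ‖x - y‖ < ‖x‖ / 2 := by
                rw [← dist_eq_norm, dist_comm]; exact mem_ball.mp hy
              have h3' : 0 ≤ ‖y‖ := norm_nonneg y
              linarith
            have hwxy : w x ≤ cstar * w y := by
              have e1 : (1 + ‖x‖) ^ γ' ≤ cstar * (1 + ‖y‖) ^ γ' := by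
                calc (1 + ‖x‖) ^ γ' ≤ (2 * (1 + ‖y‖)) ^ γ' :=
                      Real.rpow_le_rpow (by positivity) hyx hγ'pos.le
                  _ = cstar * (1 + ‖y‖) ^ γ' := by
                      rw [Real.mul_rpow (by norm_num) (by positivity), hcstardef]
              have e2 : T ≤ cstar * T := le_mul_of_one_le_left hT.le hcstar1
              calc w x ≤ min (cstar * (1 + ‖y‖) ^ γ') (cstar * T) := min_le_min e1 e2
                _ = cstar * w y := (mul_min_of_nonneg _ _ hcstar0.le).symm
            calc f y * w x ≤ f y * (cstar * w y) :=
                  mul_le_mul_of_nonneg_left hwxy (hf_nonneg y)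
              _ = cstar * (f y * w y) := by ring
              _ ≤ cstar * S := mul_le_mul_of_nonneg_left (hSle y) hcstar0.le
          calc Sx * w x ≤ (cstar * S / w x) * w x :=
                mul_le_mul_of_nonneg_right hsup_le hwx.le
            _ = cstar * S := div_mul_cancel₀ _ hwx.ne'
        have hI0 : 0 ≤ I := by
          rw [hIdef]
          exact setIntegral_nonneg measurableSet_ball.compl
            (fun z _ => mul_nonneg (hf_nonneg z) (Real.rpow_nonneg (norm_nonneg _) _))
        have hIw : I * w x ≤ K := by
          calc I * w x ≤ (K * (1 + ‖x‖) ^ (-γ')) * (1 + ‖x‖) ^ γ' :=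
                mul_le_mul hIx (hwle x) hwx.le (by positivity)
            _ = K := by
                rw [mul_assoc, ← Real.rpow_add hbp, neg_add_cancel, Real.rpow_zero, mul_one]
        have hv := hRv x hxR
        calc f x * w x ≤ (C₁ * v x * (Sx + I)) * w x :=
              mul_le_mul_of_nonneg_right hrx hwx.le
          _ ≤ (θ * (Sx + I)) * w x := by
              refine mul_le_mul_of_nonneg_right ?_ hwx.le
              exact mul_le_mul_of_nonneg_right hv (add_nonneg hsup0 hI0)
          _ = θ * (Sx * w x + I * w x) := by ring
          _ ≤ θ * (cstar * S + K) := by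
              refine mul_le_mul_of_nonneg_left ?_ hθ0.le
              exact add_le_add hsupw hIw
          _ = S / 2 + θ * K := by rw [mul_add, ← mul_assoc, hθc]; ring
          _ ≤ max K'' (S / 2 + θ * K) := le_max_right _ _
      · push_neg at hxR
        have : f x * w x ≤ K'' := by
          rw [hK''def]
          refine mul_le_mul (hfM x) ?_ (hw0 x).le hMf0
          calc w x ≤ (1 + ‖x‖) ^ γ' := hwle x
            _ ≤ (1 + R) ^ γ' :=
                Real.rpow_le_rpow (by positivity) (by linarith) hγ'pos.le
        exact this.trans (le_max_left _ _)
    have hS : S ≤ max K'' (S / 2 + θ * K) := by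
      refine csSup_le (Set.range_nonempty _) ?_
      rintro _ ⟨x, rfl⟩
      exact key x
    have hSC₀ : S ≤ C₀ := by
      rcases le_max_iff.mp hS with h | h
      · exact le_trans h (le_max_left _ _)
      · have : S ≤ 2 * θ * K := by linarith
        exact le_trans this (le_max_right _ _)
    intro x
    exact (hSle x).trans hSC₀
  refine ⟨max C₀ 1, lt_of_lt_of_le one_pos (le_max_right _ _), fun x => ?_⟩
  have hbasepos : (0 : ℝ) < 1 + ‖x‖ := by positivity
  have ht0 : (0 : ℝ) < (1 + ‖x‖) ^ γ' := Real.rpow_pos_of_pos hbasepos _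
  have hfx : f x * (1 + ‖x‖) ^ γ' ≤ max C₀ 1 := by
    have := main ((1 + ‖x‖) ^ γ') ht0 x
    rw [min_self] at this
    exact this.trans (le_max_left _ _)
  have : f x ≤ max C₀ 1 * ((1 + ‖x‖) ^ γ')⁻¹ := by
    rw [← div_eq_mul_inv, le_div_iff₀ ht0]
    exact hfx
  rwa [← Real.rpow_neg hbasepos.le] at this
end

section
/- Let d ≥ 1 be an integer and α ∈ (0,2). Let v : ℝ^d → [0,∞) be bounded with v(x) → 0 as |x| → ∞, and let f : ℝ^d → [0,∞) be bounded and measurable. Suppose there is a constant C₁ > 0 such that for every x with |x| ≥ 3, f(x) ≤ C₁ v(x) ( sup_{y ∈ B(x,|x|/2)} f(y) + ∫_{B(x,|x|/2)^c} f(z) |z − x|^{−d−α} dz ). Then there exists a constant C₂ > 0 such that f(x) ≤ C₂ v(x) |x|^{−d−α} for all x with |x| ≥ 3. -/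
open MeasureTheory Filter Metric Module Pointwise

section aux

variable {d : ℕ}

lemma my_translate (g : EuclideanSpace ℝ (Fin d) → ℝ) (x : EuclideanSpace ℝ (Fin d)) (r : ℝ) :
    ∫ z in (ball x r)ᶜ, g (z - x) = ∫ z in (ball (0:EuclideanSpace ℝ (Fin d)) r)ᶜ, g z := by
  rw [← integral_indicator measurableSet_ball.compl, ← integral_indicator measurableSet_ball.compl]
  have : ∀ z, (ball x r)ᶜ.indicator (fun z => g (z - x)) z
      = (ball (0:EuclideanSpace ℝ (Fin d)) r)ᶜ.indicator g (z - x) := by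
    intro z
    by_cases h : z ∈ (ball x r)ᶜ
    · rw [Set.indicator_of_mem h, Set.indicator_of_mem]
      simpa [mem_ball, dist_eq_norm] using h
    · rw [Set.indicator_of_notMem h, Set.indicator_of_notMem]
      simpa [mem_ball, dist_eq_norm] using h
  simp_rw [this]
  exact integral_sub_right_eq_self _ x

-- scaling on smul set

lemma my_smul_int (s : Set (EuclideanSpace ℝ (Fin d))) (b : ℝ) {R : ℝ} (hR : 0 < R) :
    ∫ z in R • s, ‖z‖ ^ (-b) = R ^ ((d:ℝ) - b) * ∫ z in s, ‖z‖ ^ (-b) := by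
  have h := Measure.setIntegral_comp_smul_of_pos volume (fun z : EuclideanSpace ℝ (Fin d) => ‖z‖ ^ (-b)) s hR
  simp only [norm_smul, Real.norm_eq_abs, abs_of_pos hR] at h
  have h2 : ∀ z : EuclideanSpace ℝ (Fin d), (R * ‖z‖) ^ (-b) = R ^ (-b) * ‖z‖ ^ (-b) :=
    fun z => Real.mul_rpow hR.le (norm_nonneg _)
  simp_rw [h2, integral_const_mul, smul_eq_mul, finrank_euclideanSpace_fin] at h
  have h3 : (R ^ d : ℝ) = R ^ (d:ℝ) := (Real.rpow_natCast R d).symm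
  have hprod : (R:ℝ) ^ ((d:ℝ)) * (R ^ d : ℝ)⁻¹ = 1 := by
    rw [h3]; field_simp
  calc ∫ z in R • s, ‖z‖ ^ (-b)
      = R ^ ((d:ℝ)) * ((R ^ d : ℝ)⁻¹ * ∫ z in R • s, ‖z‖ ^ (-b)) := by
        rw [← mul_assoc, hprod, one_mul]
    _ = R ^ ((d:ℝ)) * (R ^ (-b) * ∫ z in s, ‖z‖ ^ (-b)) := by rw [← h]
    _ = R ^ ((d:ℝ) - b) * ∫ z in s, ‖z‖ ^ (-b) := by
        rw [← mul_assoc, ← Real.rpow_add hR]; ring_nf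

lemma my_smul_compl {r : ℝ} (hr : 0 < r) :
    r • (ball (0:EuclideanSpace ℝ (Fin d)) 1)ᶜ = (ball (0:EuclideanSpace ℝ (Fin d)) r)ᶜ := by
  ext z
  rw [Set.mem_smul_set_iff_inv_smul_mem₀ hr.ne']
  simp only [Set.mem_compl_iff, mem_ball, dist_zero_right, norm_smul, norm_inv,
    Real.norm_eq_abs, abs_of_pos hr]
  rw [not_iff_not]
  rw [inv_mul_lt_iff₀ hr, mul_one]

lemma my_smul_annulus {r t : ℝ} (ht : 0 < t) :
    t • (ball (0:EuclideanSpace ℝ (Fin d)) r \ ball 0 1)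
      = ball (0:EuclideanSpace ℝ (Fin d)) (t*r) \ ball 0 t := by
  ext z
  rw [Set.mem_smul_set_iff_inv_smul_mem₀ ht.ne']
  simp only [Set.mem_diff, mem_ball, dist_zero_right, norm_smul, norm_inv,
    Real.norm_eq_abs, abs_of_pos ht, Set.mem_compl_iff]
  constructor
  · rintro ⟨h1, h2⟩
    constructor
    · rw [inv_mul_lt_iff₀ ht] at h1; linarith [h1]
    · intro hc; exact h2 (by rw [inv_mul_lt_iff₀ ht, mul_one]; exact hc)
  · rintro ⟨h1, h2⟩
    constructor
    · rw [inv_mul_lt_iff₀ ht]; linarith [h1]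
    · intro hc; rw [inv_mul_lt_iff₀ ht, mul_one] at hc; exact h2 hc

lemma my_compl_val {s : ℝ} {r : ℝ} (hr : 0 < r) (x : EuclideanSpace ℝ (Fin d)) :
    ∫ z in (ball x r)ᶜ, ‖z - x‖ ^ (-s)
      = r ^ ((d:ℝ) - s) * ∫ z in (ball (0:EuclideanSpace ℝ (Fin d)) 1)ᶜ, ‖z‖ ^ (-s) := by
  rw [my_translate (fun z => ‖z‖ ^ (-s)) x r, ← my_smul_compl hr, my_smul_int _ _ hr]

lemma my_ker_int {s : ℝ} (hs : (d:ℝ) < s) (hs0 : 0 < s) (x : EuclideanSpace ℝ (Fin d))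
    {r : ℝ} (hr : 0 < r) :
    IntegrableOn (fun z : EuclideanSpace ℝ (Fin d) => ‖z - x‖ ^ (-s)) (ball x r)ᶜ volume := by
  have hs' : (finrank ℝ (EuclideanSpace ℝ (Fin d)) : ℝ) < s := by
    rwa [finrank_euclideanSpace_fin]
  have hint : Integrable (fun z : EuclideanSpace ℝ (Fin d) => (1 + ‖z - x‖) ^ (-s)) volume := by
    have h := integrable_one_add_norm (μ := (volume : Measure (EuclideanSpace ℝ (Fin d)))) hs'
    exact h.comp_sub_right x
  refine ((hint.const_mul ((1 + 1/r) ^ s)).integrableOn).mono' ?_ ?_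
  · apply Measurable.aestronglyMeasurable; fun_prop
  · rw [ae_restrict_iff' measurableSet_ball.compl]
    refine ae_of_all _ fun z hz => ?_
    have hw : r ≤ ‖z - x‖ := by
      simpa [mem_ball, dist_eq_norm] using hz
    have hwpos : 0 < ‖z - x‖ := lt_of_lt_of_le hr hw
    have h1pos : (0:ℝ) < 1 + ‖z - x‖ := by positivity
    rw [Real.norm_eq_abs, abs_of_nonneg (Real.rpow_nonneg (norm_nonneg _) _)]
    have key : (‖z - x‖)⁻¹ ≤ (1 + 1/r) * (1 + ‖z - x‖)⁻¹ := by
      have hdr : (1:ℝ) ≤ ‖z - x‖ / r := (one_le_div hr).2 hw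
      have h1 : (1:ℝ) + ‖z - x‖ ≤ (1 + 1/r) * ‖z - x‖ := by
        have : ‖z - x‖ / r = ‖z - x‖ * (1/r) := by ring
        nlinarith [hdr, hwpos]
      calc (‖z - x‖)⁻¹ = ((1 + 1/r) * ‖z - x‖)⁻¹ * (1 + 1/r) := by
            field_simp
        _ ≤ (1 + ‖z - x‖)⁻¹ * (1 + 1/r) := by gcongr
        _ = (1 + 1/r) * (1 + ‖z - x‖)⁻¹ := mul_comm _ _
    calc ‖z - x‖ ^ (-s) = ((‖z - x‖)⁻¹) ^ s := by
          rw [Real.rpow_neg (norm_nonneg _), ← Real.inv_rpow (norm_nonneg _)]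
      _ ≤ ((1 + 1/r) * (1 + ‖z - x‖)⁻¹) ^ s :=
          Real.rpow_le_rpow (by positivity) key hs0.le
      _ = (1 + 1/r) ^ s * (1 + ‖z - x‖) ^ (-s) := by
          rw [Real.mul_rpow (by positivity) (by positivity),
            Real.inv_rpow h1pos.le, ← Real.rpow_neg h1pos.le]

lemma my_annulus_int {b : ℝ} (hb0 : 0 ≤ b) (R : ℝ) :
    IntegrableOn (fun z : EuclideanSpace ℝ (Fin d) => ‖z‖ ^ (-b))
      (ball (0:EuclideanSpace ℝ (Fin d)) R \ ball 0 1) volume := by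
  apply Measure.integrableOn_of_bounded (M := 1)
  · exact ne_of_lt (lt_of_le_of_lt (measure_mono Set.diff_subset) measure_ball_lt_top)
  · apply Measurable.aestronglyMeasurable; fun_prop
  · rw [ae_restrict_iff' (measurableSet_ball.diff measurableSet_ball)]
    refine ae_of_all _ fun z hz => ?_
    have h1 : 1 ≤ ‖z‖ := by
      have := hz.2; simp only [mem_ball, dist_zero_right, not_lt] at this; exact this
    rw [Real.norm_eq_abs, abs_of_nonneg (Real.rpow_nonneg (norm_nonneg _) _)]
    exact Real.rpow_le_one_of_one_le_of_nonpos h1 (neg_nonpos.2 hb0)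

lemma my_annulus {b : ℝ} (hb0 : 0 ≤ b) (hbd : b < d) :
    ∃ c : ℝ, 0 < c ∧ ∀ r : ℝ, 1 ≤ r →
      ∫ z in ball (0:EuclideanSpace ℝ (Fin d)) r \ ball 0 1, ‖z‖ ^ (-b) ≤ c * r ^ ((d:ℝ) - b) := by
  set A : ℝ → ℝ := fun r => ∫ z in ball (0:EuclideanSpace ℝ (Fin d)) r \ ball 0 1, ‖z‖ ^ (-b)
    with hA
  set T : ℝ := (2:ℝ) ^ ((d:ℝ) - b) with hTdef
  have hdb : (0:ℝ) < (d:ℝ) - b := by linarith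
  have hT : 1 < T := Real.one_lt_rpow_iff_of_pos two_pos |>.2 (Or.inl ⟨one_lt_two, hdb⟩)
  have hAnonneg : ∀ r, 0 ≤ A r := fun r =>
    setIntegral_nonneg (measurableSet_ball.diff measurableSet_ball)
      (fun z _ => Real.rpow_nonneg (norm_nonneg _) _)
  have hAmono : ∀ r1 r2 : ℝ, r1 ≤ r2 → A r1 ≤ A r2 := by
    intro r1 r2 h
    apply setIntegral_mono_set (my_annulus_int hb0 r2)
    · exact ae_of_all _ fun z => Real.rpow_nonneg (norm_nonneg _) _
    · exact HasSubset.Subset.eventuallyLE (Set.diff_subset_diff_left (ball_subset_ball h))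
  have hstep : ∀ r : ℝ, 1 ≤ r → A (2*r) = A 2 + T * A r := by
    intro r hr
    have hsets : ball (0:EuclideanSpace ℝ (Fin d)) (2*r) \ ball 0 1
        = (ball 0 2 \ ball 0 1) ∪ (ball 0 (2*r) \ ball 0 2) := by
      ext z
      simp only [Set.mem_diff, mem_ball, dist_zero_right, Set.mem_union]
      constructor
      · rintro ⟨h1, h2⟩
        by_cases hc : ‖z‖ < 2
        · exact Or.inl ⟨hc, h2⟩
        · exact Or.inr ⟨h1, hc⟩
      · rintro (⟨h1, h2⟩ | ⟨h1, h2⟩)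
        · exact ⟨lt_of_lt_of_le h1 (by linarith), h2⟩
        · refine ⟨h1, fun hc => h2 (lt_of_lt_of_le hc one_le_two)⟩
    have hdisj : Disjoint (ball (0:EuclideanSpace ℝ (Fin d)) 2 \ ball 0 1)
        (ball (0:EuclideanSpace ℝ (Fin d)) (2*r) \ ball 0 2) := by
      rw [Set.disjoint_left]
      rintro z ⟨hz1, _⟩ ⟨_, hz2⟩
      exact hz2 hz1
    have hsecond : ∫ z in ball (0:EuclideanSpace ℝ (Fin d)) (2*r) \ ball 0 2, ‖z‖ ^ (-b)
        = T * A r := by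
      rw [← my_smul_annulus two_pos, my_smul_int _ _ two_pos]
    rw [hA]
    simp only
    rw [hsets, setIntegral_union hdisj (measurableSet_ball.diff measurableSet_ball)
      ((my_annulus_int hb0 2).mono_set (Set.diff_subset_diff_left (ball_subset_ball (by linarith))))
      ((my_annulus_int hb0 (2*r)).mono_set (Set.diff_subset_diff_right (ball_subset_ball one_le_two))),
      hsecond]
  set c0 : ℝ := A 2 / (T - 1) with hc0
  have hc0nonneg : 0 ≤ c0 := div_nonneg (hAnonneg 2) (by linarith)
  have hc0id : c0 * (T - 1) = A 2 := div_mul_cancel₀ _ (by linarith)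
  have key : ∀ n : ℕ, A (2^n) ≤ c0 * (T^n - 1) := by
    intro n
    induction n with
    | zero =>
      simp only [pow_zero]
      have : A 1 = 0 := by
        rw [hA]; simp only [Set.diff_self, setIntegral_empty]
      rw [this]; simp
    | succ n ih =>
      have h2n : (1:ℝ) ≤ 2^n := one_le_pow₀ one_le_two
      have : (2:ℝ)^(n+1) = 2 * 2^n := by ring
      rw [this, hstep _ h2n]
      have hTn : T^(n+1) = T * T^n := by ring
      have hTpos : (0:ℝ) < T := by linarith
      nlinarith [ih, hAnonneg (2^n), mul_le_mul_of_nonneg_left ih hTpos.le]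
  refine ⟨c0 * T + 1, by positivity, fun r hr => ?_⟩
  set n : ℕ := ⌊Real.logb 2 r⌋₊ + 1 with hn
  have hrpos : (0:ℝ) < r := by linarith
  have hlog : 0 ≤ Real.logb 2 r := Real.logb_nonneg one_lt_two hr
  have hrlog : (2:ℝ) ^ Real.logb 2 r = r := Real.rpow_logb two_pos (by norm_num) hrpos
  have h2n_ge : r ≤ (2:ℝ)^n := by
    have h1 : Real.logb 2 r < (n:ℝ) := by
      rw [hn]; push_cast; exact Nat.lt_floor_add_one _
    calc r = (2:ℝ) ^ Real.logb 2 r := hrlog.symm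
      _ ≤ (2:ℝ) ^ (n:ℝ) := Real.rpow_le_rpow_of_exponent_le one_le_two h1.le
      _ = (2:ℝ) ^ n := by rw [Real.rpow_natCast]
  have h2n_le : (2:ℝ)^n ≤ 2 * r := by
    have h1 : (n:ℝ) ≤ Real.logb 2 r + 1 := by
      rw [hn]; push_cast
      have := Nat.floor_le hlog
      linarith
    calc (2:ℝ)^n = (2:ℝ) ^ (n:ℝ) := by rw [Real.rpow_natCast]
      _ ≤ (2:ℝ) ^ (Real.logb 2 r + 1) := Real.rpow_le_rpow_of_exponent_le one_le_two h1
      _ = (2:ℝ) ^ Real.logb 2 r * 2 := by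
          rw [Real.rpow_add two_pos, Real.rpow_one]
      _ = 2 * r := by rw [hrlog]; ring
  have hTn_eq : T^n = ((2:ℝ)^n) ^ ((d:ℝ) - b) := by
    rw [hTdef, ← Real.rpow_natCast ((2:ℝ) ^ ((d:ℝ)-b)) n, ← Real.rpow_mul two_pos.le,
      mul_comm, Real.rpow_mul two_pos.le, Real.rpow_natCast]
  calc A r ≤ A (2^n) := hAmono _ _ h2n_ge
    _ ≤ c0 * (T^n - 1) := key n
    _ ≤ c0 * T^n := by nlinarith [pow_nonneg (by linarith : (0:ℝ) ≤ T) n]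
    _ = c0 * ((2:ℝ)^n) ^ ((d:ℝ) - b) := by rw [hTn_eq]
    _ ≤ c0 * (2*r) ^ ((d:ℝ) - b) := by
        apply mul_le_mul_of_nonneg_left _ hc0nonneg
        exact Real.rpow_le_rpow (by positivity) h2n_le hdb.le
    _ = c0 * ((2:ℝ) ^ ((d:ℝ)-b) * r ^ ((d:ℝ)-b)) := by
        rw [Real.mul_rpow two_pos.le hrpos.le]
    _ = (c0 * T) * r ^ ((d:ℝ)-b) := by rw [hTdef]; ring
    _ ≤ (c0 * T + 1) * r ^ ((d:ℝ)-b) := by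
        have : (0:ℝ) ≤ r ^ ((d:ℝ)-b) := Real.rpow_nonneg hrpos.le _
        nlinarith

lemma my_ball_int (f : EuclideanSpace ℝ (Fin d) → ℝ) (hf_meas : Measurable f)
    {M : ℝ} (habs : ∀ x, |f x| ≤ M) (R : ℝ) :
    IntegrableOn f (ball (0:EuclideanSpace ℝ (Fin d)) R) volume := by
  apply Measure.integrableOn_of_bounded (M := M) (ne_of_lt measure_ball_lt_top)
    hf_meas.aestronglyMeasurable
  exact ae_of_all _ fun z => habs z

lemma my_mass (hd : 1 ≤ d) {α : ℝ} (hα : α ∈ Set.Ioo (0:ℝ) 2)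
    (f : EuclideanSpace ℝ (Fin d) → ℝ)
    (hf_nonneg : ∀ x, 0 ≤ f x) (hf_meas : Measurable f)
    {M : ℝ} (hM : ∀ x, f x ≤ M) (hM0 : 0 ≤ M)
    {β K : ℝ} (hβ0 : 0 ≤ β) (hK : 0 ≤ K)
    (tb : ∀ z : EuclideanSpace ℝ (Fin d), 3 ≤ ‖z‖ → f z ≤ K * ‖z‖ ^ (-β)) :
    ∃ Cm : ℝ, 0 ≤ Cm ∧ ∀ r : ℝ, 3 ≤ r →
      ∫ z in ball (0:EuclideanSpace ℝ (Fin d)) r, f z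
        ≤ Cm * r ^ ((d:ℝ) - min β ((d:ℝ) - α/2)) := by
  obtain ⟨hα0, hα2⟩ := hα
  set b : ℝ := min β ((d:ℝ) - α/2) with hb
  have hd1 : (1:ℝ) ≤ (d:ℝ) := by exact_mod_cast hd
  have hb0 : 0 ≤ b := le_min hβ0 (by linarith)
  have hbd : b < (d:ℝ) := lt_of_le_of_lt (min_le_right _ _) (by linarith)
  have habs : ∀ x, |f x| = f x := fun x => abs_of_nonneg (hf_nonneg x)
  have tb' : ∀ z : EuclideanSpace ℝ (Fin d), 3 ≤ ‖z‖ → f z ≤ K * ‖z‖ ^ (-b) := by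
    intro z hz
    refine (tb z hz).trans (mul_le_mul_of_nonneg_left ?_ hK)
    exact Real.rpow_le_rpow_of_exponent_le (by linarith) (neg_le_neg (min_le_left _ _))
  obtain ⟨c, hc, hann⟩ := my_annulus hb0 hbd
  set V : ℝ := (volume (ball (0:EuclideanSpace ℝ (Fin d)) 3)).toReal with hV
  have hV0 : 0 ≤ V := ENNReal.toReal_nonneg
  refine ⟨M * V + K * c, by positivity, fun r hr => ?_⟩
  have hr1 : (1:ℝ) ≤ r := by linarith
  have hrpow1 : (1:ℝ) ≤ r ^ ((d:ℝ) - b) := Real.one_le_rpow hr1 (by linarith)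
  have hrpow0 : (0:ℝ) ≤ r ^ ((d:ℝ) - b) := by linarith
  have hsplit : ball (0:EuclideanSpace ℝ (Fin d)) r
      = ball 0 3 ∪ (ball 0 r \ ball 0 3) :=
    (Set.union_diff_cancel (ball_subset_ball hr)).symm
  have hint3 : IntegrableOn f (ball (0:EuclideanSpace ℝ (Fin d)) 3) volume :=
    my_ball_int f hf_meas (fun x => (habs x).le.trans (hM x)) 3
  have hintdiff : IntegrableOn f (ball (0:EuclideanSpace ℝ (Fin d)) r \ ball 0 3) volume :=
    (my_ball_int f hf_meas (fun x => (habs x).le.trans (hM x)) r).mono_set Set.diff_subset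
  have step1 : ∫ z in ball (0:EuclideanSpace ℝ (Fin d)) r, f z
      = (∫ z in ball (0:EuclideanSpace ℝ (Fin d)) 3, f z)
        + ∫ z in ball (0:EuclideanSpace ℝ (Fin d)) r \ ball 0 3, f z := by
    conv_lhs => rw [hsplit]
    exact setIntegral_union Set.disjoint_sdiff_right
      (measurableSet_ball.diff measurableSet_ball) hint3 hintdiff
  have bound1 : ∫ z in ball (0:EuclideanSpace ℝ (Fin d)) 3, f z ≤ M * V := by
    calc ∫ z in ball (0:EuclideanSpace ℝ (Fin d)) 3, f z
        ≤ ∫ _ in ball (0:EuclideanSpace ℝ (Fin d)) 3, M :=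
          setIntegral_mono_on hint3 (integrableOn_const measure_ball_lt_top.ne)
            measurableSet_ball (fun x _ => hM x)
      _ = V * M := by rw [setIntegral_const, smul_eq_mul]; rfl
      _ = M * V := mul_comm _ _
  have bound2 : ∫ z in ball (0:EuclideanSpace ℝ (Fin d)) r \ ball 0 3, f z
      ≤ K * (c * r ^ ((d:ℝ) - b)) := by
    have hker : IntegrableOn (fun z : EuclideanSpace ℝ (Fin d) => K * ‖z‖ ^ (-b))
        (ball (0:EuclideanSpace ℝ (Fin d)) r \ ball 0 3) volume := by
      refine ((my_annulus_int hb0 r).mono_set ?_).const_mul K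
      exact Set.diff_subset_diff_right (ball_subset_ball (by norm_num))
    calc ∫ z in ball (0:EuclideanSpace ℝ (Fin d)) r \ ball 0 3, f z
        ≤ ∫ z in ball (0:EuclideanSpace ℝ (Fin d)) r \ ball 0 3, K * ‖z‖ ^ (-b) := by
          refine setIntegral_mono_on hintdiff hker
            (measurableSet_ball.diff measurableSet_ball) (fun z hz => ?_)
          refine tb' z ?_
          have := hz.2
          simp only [mem_ball, dist_zero_right, not_lt] at this
          exact this
      _ = K * ∫ z in ball (0:EuclideanSpace ℝ (Fin d)) r \ ball 0 3, ‖z‖ ^ (-b) := by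
          rw [integral_const_mul]
      _ ≤ K * ∫ z in ball (0:EuclideanSpace ℝ (Fin d)) r \ ball 0 1, ‖z‖ ^ (-b) := by
          refine mul_le_mul_of_nonneg_left ?_ hK
          refine setIntegral_mono_set (my_annulus_int hb0 r)
            (ae_of_all _ fun z => Real.rpow_nonneg (norm_nonneg _) _) ?_
          exact HasSubset.Subset.eventuallyLE
            (Set.diff_subset_diff_right (ball_subset_ball (by norm_num)))
      _ ≤ K * (c * r ^ ((d:ℝ) - b)) := mul_le_mul_of_nonneg_left (hann r hr1) hK
  calc ∫ z in ball (0:EuclideanSpace ℝ (Fin d)) r, f z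
      ≤ M * V + K * (c * r ^ ((d:ℝ) - b)) := by rw [step1]; exact add_le_add bound1 bound2
    _ ≤ (M * V + K * c) * r ^ ((d:ℝ) - b) := by nlinarith [mul_le_mul_of_nonneg_left hrpow1 (by positivity : (0:ℝ) ≤ M*V)]

lemma my_J (hd : 1 ≤ d) {α : ℝ} (hα : α ∈ Set.Ioo (0:ℝ) 2)
    (f : EuclideanSpace ℝ (Fin d) → ℝ)
    (hf_nonneg : ∀ x, 0 ≤ f x) (hf_meas : Measurable f)
    {M : ℝ} (hM : ∀ x, f x ≤ M) (hM0 : 0 ≤ M)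
    {γ K Cm βt : ℝ} (hγ0 : 0 ≤ γ) (hγle : γ ≤ βt + α) (hβt : 0 ≤ βt) (hK : 0 ≤ K) (hCm : 0 ≤ Cm)
    (tb : ∀ z : EuclideanSpace ℝ (Fin d), 3 ≤ ‖z‖ → f z ≤ K * ‖z‖ ^ (-βt))
    (mb : ∀ r : ℝ, 3 ≤ r → ∫ z in ball (0:EuclideanSpace ℝ (Fin d)) r, f z
      ≤ Cm * r ^ ((d:ℝ) + α - γ)) :
    ∃ B : ℝ, 0 < B ∧ ∀ x : EuclideanSpace ℝ (Fin d), 6 ≤ ‖x‖ →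
      ∫ z in (ball x (‖x‖/2))ᶜ, f z * ‖z - x‖ ^ (-(d:ℝ) - α) ≤ B * ‖x‖ ^ (-γ) := by
  obtain ⟨hα0, hα2⟩ := hα
  set s : ℝ := (d:ℝ) + α with hs
  have hsd : (d:ℝ) < s := by rw [hs]; linarith
  have hs0 : 0 < s := by
    have : (1:ℝ) ≤ (d:ℝ) := by exact_mod_cast hd
    linarith
  set I : ℝ := ∫ z in (ball (0:EuclideanSpace ℝ (Fin d)) 1)ᶜ, ‖z‖ ^ (-s) with hI
  have hI0 : 0 ≤ I :=
    setIntegral_nonneg measurableSet_ball.compl (fun z _ => Real.rpow_nonneg (norm_nonneg _) _)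
  have hKI : 0 ≤ K * I + Cm := by nlinarith
  refine ⟨(K * I + Cm) * 2 ^ γ + 1, by nlinarith [Real.rpow_nonneg (le_of_lt two_pos) γ, mul_nonneg hKI (Real.rpow_nonneg (le_of_lt two_pos) γ)], fun x hx => ?_⟩
  have hexp : -(d:ℝ) - α = -s := by rw [hs]; ring
  rw [hexp]
  set r : ℝ := ‖x‖ / 2 with hrdef
  have hr3 : 3 ≤ r := by rw [hrdef]; linarith
  have hr1 : 1 ≤ r := by linarith
  have hr0 : (0:ℝ) < r := by linarith
  set ker : EuclideanSpace ℝ (Fin d) → ℝ := fun z => ‖z - x‖ ^ (-s) with hkerdef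
  have hker_nonneg : ∀ z, 0 ≤ ker z := fun z => Real.rpow_nonneg (norm_nonneg _) _
  have hker_int : IntegrableOn ker (ball x r)ᶜ volume := my_ker_int hsd hs0 x hr0
  have hprod_meas : Measurable fun z => f z * ker z := by
    apply hf_meas.mul; fun_prop
  have hprod_int : IntegrableOn (fun z => f z * ker z) (ball x r)ᶜ volume := by
    refine (hker_int.const_mul M).mono' hprod_meas.aestronglyMeasurable ?_
    rw [ae_restrict_iff' measurableSet_ball.compl]
    refine ae_of_all _ fun z _ => ?_
    rw [Real.norm_eq_abs, abs_of_nonneg (mul_nonneg (hf_nonneg z) (hker_nonneg z))]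
    exact mul_le_mul_of_nonneg_right (hM z) (hker_nonneg z)
  set S1 : Set (EuclideanSpace ℝ (Fin d)) := (ball x r)ᶜ ∩ (ball 0 r)ᶜ with hS1
  set S2 : Set (EuclideanSpace ℝ (Fin d)) := (ball x r)ᶜ ∩ ball 0 r with hS2
  have hunion : (ball x r)ᶜ = S1 ∪ S2 := by
    rw [hS1, hS2, ← Set.inter_union_distrib_left, Set.compl_union_self, Set.inter_univ]
  have hdisj : Disjoint S1 S2 := by
    rw [Set.disjoint_left]
    rintro z ⟨_, hz1⟩ ⟨_, hz2⟩
    exact hz1 hz2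
  have hmeasS2 : MeasurableSet S2 := measurableSet_ball.compl.inter measurableSet_ball
  have habsf : ∀ z, |f z| ≤ M := fun z => by
    rw [abs_of_nonneg (hf_nonneg z)]; exact hM z
  -- norm lower bound on complement
  have hnormc : ∀ z ∈ (ball x r)ᶜ, r ≤ ‖z - x‖ := fun z hz => by
    simpa [mem_ball, dist_eq_norm] using hz
  -- S1 piece
  have hfS1 : ∀ z ∈ S1, f z * ker z ≤ (K * r ^ (-βt)) * ker z := by
    rintro z ⟨hz1, hz2⟩
    have hzr : r ≤ ‖z‖ := by
      simpa [mem_ball, dist_zero_right] using hz2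
    have h3z : 3 ≤ ‖z‖ := le_trans hr3 hzr
    have : f z ≤ K * r ^ (-βt) := by
      refine (tb z h3z).trans (mul_le_mul_of_nonneg_left ?_ hK)
      exact Real.rpow_le_rpow_of_nonpos hr0 hzr (neg_nonpos.2 hβt)
    exact mul_le_mul_of_nonneg_right this (hker_nonneg z)
  have hS1bound : ∫ z in S1, f z * ker z ≤ K * I * r ^ (-γ) := by
    have hcint : IntegrableOn (fun z => (K * r ^ (-βt)) * ker z) (ball x r)ᶜ volume :=
      hker_int.const_mul _
    have h1 : ∫ z in S1, f z * ker z ≤ ∫ z in S1, (K * r ^ (-βt)) * ker z :=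
      setIntegral_mono_on (hprod_int.mono_set Set.inter_subset_left)
        (hcint.mono_set Set.inter_subset_left)
        (measurableSet_ball.compl.inter measurableSet_ball.compl) hfS1
    have h2 : ∫ z in S1, (K * r ^ (-βt)) * ker z = (K * r ^ (-βt)) * ∫ z in S1, ker z :=
      integral_const_mul _ _
    have h3 : ∫ z in S1, ker z ≤ ∫ z in (ball x r)ᶜ, ker z := by
      refine setIntegral_mono_set hker_int
        (ae_of_all _ fun z => hker_nonneg z)
        (HasSubset.Subset.eventuallyLE Set.inter_subset_left)
    have h4 : ∫ z in (ball x r)ᶜ, ker z = r ^ (-α) * I := by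
      rw [hkerdef, my_compl_val hr0 x, ← hI]
      congr 1
      rw [show (d:ℝ) - s = -α by rw [hs]; ring]
    have h5 : (K * r ^ (-βt)) * (r ^ (-α) * I) = K * I * (r ^ (-βt) * r ^ (-α)) := by ring
    have h6 : r ^ (-βt) * r ^ (-α) = r ^ (-βt - α) := by
      rw [← Real.rpow_add hr0]; ring_nf
    have h7 : r ^ (-βt - α) ≤ r ^ (-γ) :=
      Real.rpow_le_rpow_of_exponent_le hr1 (by linarith)
    have hker_int_nonneg : 0 ≤ ∫ z in S1, ker z :=
      setIntegral_nonneg (measurableSet_ball.compl.inter measurableSet_ball.compl)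
        (fun z _ => hker_nonneg z)
    calc ∫ z in S1, f z * ker z ≤ (K * r ^ (-βt)) * ∫ z in S1, ker z := by rw [← h2]; exact h1
      _ ≤ (K * r ^ (-βt)) * (r ^ (-α) * I) := by
          rw [← h4]
          exact mul_le_mul_of_nonneg_left h3 (mul_nonneg hK (Real.rpow_nonneg hr0.le _))
      _ = K * I * (r ^ (-βt - α)) := by rw [h5, h6]
      _ ≤ K * I * r ^ (-γ) := mul_le_mul_of_nonneg_left h7 (mul_nonneg hK hI0)
  -- S2 piece
  have hfS2 : ∀ z ∈ S2, f z * ker z ≤ f z * r ^ (-s) := by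
    rintro z ⟨hz1, _⟩
    exact mul_le_mul_of_nonneg_left
      (Real.rpow_le_rpow_of_nonpos hr0 (hnormc z hz1) (neg_nonpos.2 hs0.le)) (hf_nonneg z)
  have hfintS2 : IntegrableOn f S2 volume :=
    (my_ball_int f hf_meas habsf r).mono_set Set.inter_subset_right
  have hS2bound : ∫ z in S2, f z * ker z ≤ Cm * r ^ (-γ) := by
    have h1 : ∫ z in S2, f z * ker z ≤ ∫ z in S2, f z * r ^ (-s) :=
      setIntegral_mono_on (hprod_int.mono_set Set.inter_subset_left)
        (hfintS2.mul_const _) hmeasS2 hfS2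
    have h2 : ∫ z in S2, f z * r ^ (-s) = (∫ z in S2, f z) * r ^ (-s) :=
      integral_mul_const _ _
    have h3 : ∫ z in S2, f z ≤ ∫ z in ball (0:EuclideanSpace ℝ (Fin d)) r, f z :=
      setIntegral_mono_set (my_ball_int f hf_meas habsf r)
        (ae_of_all _ fun z => hf_nonneg z)
        (HasSubset.Subset.eventuallyLE Set.inter_subset_right)
    have h4 : ∫ z in ball (0:EuclideanSpace ℝ (Fin d)) r, f z ≤ Cm * r ^ (s - γ) := by
      have := mb r hr3
      rwa [show (d:ℝ) + α - γ = s - γ by rw [hs]] at this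
    calc ∫ z in S2, f z * ker z ≤ (∫ z in S2, f z) * r ^ (-s) := by rw [← h2]; exact h1
      _ ≤ (Cm * r ^ (s - γ)) * r ^ (-s) :=
          mul_le_mul_of_nonneg_right (h3.trans h4) (Real.rpow_nonneg hr0.le _)
      _ = Cm * (r ^ (s - γ) * r ^ (-s)) := by ring
      _ = Cm * r ^ (-γ) := by rw [← Real.rpow_add hr0]; ring_nf
  -- combine
  have hsplit : ∫ z in (ball x r)ᶜ, f z * ker z
      = (∫ z in S1, f z * ker z) + ∫ z in S2, f z * ker z := by
    conv_lhs => rw [hunion]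
    exact setIntegral_union hdisj hmeasS2 (hprod_int.mono_set Set.inter_subset_left)
      (hprod_int.mono_set Set.inter_subset_left)
  have hrg : r ^ (-γ) = 2 ^ γ * ‖x‖ ^ (-γ) := by
    rw [hrdef, Real.div_rpow (norm_nonneg x) two_pos.le, Real.rpow_neg two_pos.le,
      div_inv_eq_mul]
    ring
  have hxg : (0:ℝ) ≤ ‖x‖ ^ (-γ) := Real.rpow_nonneg (norm_nonneg x) _
  calc ∫ z in (ball x r)ᶜ, f z * ker z
      = (∫ z in S1, f z * ker z) + ∫ z in S2, f z * ker z := hsplit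
    _ ≤ K * I * r ^ (-γ) + Cm * r ^ (-γ) := add_le_add hS1bound hS2bound
    _ = (K * I + Cm) * r ^ (-γ) := by ring
    _ = (K * I + Cm) * 2 ^ γ * ‖x‖ ^ (-γ) := by rw [hrg]; ring
    _ ≤ ((K * I + Cm) * 2 ^ γ + 1) * ‖x‖ ^ (-γ) := by nlinarith [hxg]

lemma my_core (hd : 1 ≤ d) {α : ℝ} (hα : α ∈ Set.Ioo (0:ℝ) 2)
    (v f : EuclideanSpace ℝ (Fin d) → ℝ)
    (hv_nonneg : ∀ x, 0 ≤ v x)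
    (hv_lim : Tendsto v (cocompact (EuclideanSpace ℝ (Fin d))) (nhds 0))
    (hf_nonneg : ∀ x, 0 ≤ f x)
    {M : ℝ} (hM : ∀ x, f x ≤ M) (hM0 : 0 ≤ M)
    {C₁ : ℝ} (hC₁ : 0 < C₁)
    (hrec : ∀ x : EuclideanSpace ℝ (Fin d), 3 ≤ ‖x‖ →
      f x ≤ C₁ * v x * (sSup (f '' ball x (‖x‖ / 2)) +
        ∫ z in (ball x (‖x‖ / 2))ᶜ, f z * ‖z - x‖ ^ (-(d : ℝ) - α) ∂volume))
    {γ B : ℝ} (hγ0 : 0 ≤ γ) (hB : 0 < B)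
    (hJ : ∀ x : EuclideanSpace ℝ (Fin d), 6 ≤ ‖x‖ →
      ∫ z in (ball x (‖x‖ / 2))ᶜ, f z * ‖z - x‖ ^ (-(d : ℝ) - α) ∂volume ≤ B * ‖x‖ ^ (-γ)) :
    ∃ K : ℝ, 0 < K ∧ ∀ x : EuclideanSpace ℝ (Fin d), 3 ≤ ‖x‖ → f x ≤ K * ‖x‖ ^ (-γ) := by
  set ε : ℝ := (2:ℝ) ^ (-γ - 1) with hεdef
  have hε0 : 0 < ε := Real.rpow_pos_of_pos two_pos _
  -- choose R
  obtain ⟨R, hR6, hvR⟩ : ∃ R : ℝ, 6 ≤ R ∧ ∀ y : EuclideanSpace ℝ (Fin d), R ≤ ‖y‖ →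
      C₁ * v y ≤ ε := by
    have hev : ∀ᶠ y in cocompact (EuclideanSpace ℝ (Fin d)), v y < ε / C₁ :=
      hv_lim.eventually_lt_const (by positivity)
    obtain ⟨t, ht_cpt, ht⟩ := (Filter.hasBasis_cocompact.eventually_iff).mp hev
    obtain ⟨ρ, hρ⟩ := ht_cpt.isBounded.subset_closedBall 0
    refine ⟨max 6 (ρ + 1), le_max_left _ _, fun y hy => ?_⟩
    have hy' : y ∉ t := by
      intro hyt
      have := hρ hyt
      simp only [mem_closedBall, dist_zero_right] at this
      have : ρ + 1 ≤ ‖y‖ := le_trans (le_max_right _ _) hy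
      linarith [mem_closedBall_zero_iff.mp (hρ hyt)]
    have := ht hy'
    have h2 : v y < ε / C₁ := this
    calc C₁ * v y ≤ C₁ * (ε / C₁) := mul_le_mul_of_nonneg_left h2.le hC₁.le
      _ = ε := by field_simp
  have hR0 : (0:ℝ) < R := by linarith
  have hR1 : (1:ℝ) ≤ R := by linarith
  set D : ℝ := max M B with hDdef
  have hD : 0 < D := lt_of_lt_of_le hB (le_max_right _ _)
  set t : ℝ := (2:ℝ) ^ (-γ) with htdef
  have ht0 : 0 < t := Real.rpow_pos_of_pos two_pos _
  have ht1 : t ≤ 1 := Real.rpow_le_one_of_one_le_of_nonpos one_le_two (by linarith)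
  have hpow : ∀ m : ℕ, ((2:ℝ)^m) ^ (-γ) = t^m := by
    intro m
    rw [← Real.rpow_natCast (2:ℝ) m, ← Real.rpow_mul two_pos.le, mul_comm,
      Real.rpow_mul two_pos.le, Real.rpow_natCast]
  have hbddf : ∀ (x : EuclideanSpace ℝ (Fin d)) (r : ℝ), BddAbove (f '' ball x r) := by
    intro x r
    refine ⟨M, ?_⟩
    rintro _ ⟨y, _, rfl⟩
    exact hM y
  have hSup_nonneg : ∀ (x : EuclideanSpace ℝ (Fin d)), 3 ≤ ‖x‖ →
      0 ≤ sSup (f '' ball x (‖x‖/2)) := by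
    intro x hx
    have hx0 : x ∈ ball x (‖x‖/2) := mem_ball_self (by linarith)
    exact le_trans (hf_nonneg x) (le_csSup (hbddf x _) ⟨x, hx0, rfl⟩)
  have hJ_nonneg : ∀ (x : EuclideanSpace ℝ (Fin d)),
      0 ≤ ∫ z in (ball x (‖x‖ / 2))ᶜ, f z * ‖z - x‖ ^ (-(d : ℝ) - α) ∂volume := by
    intro x
    exact setIntegral_nonneg measurableSet_ball.compl
      (fun z _ => mul_nonneg (hf_nonneg z) (Real.rpow_nonneg (norm_nonneg _) _))
  -- main induction
  have Q : ∀ n : ℕ, ∀ x : EuclideanSpace ℝ (Fin d), 2^n * R ≤ ‖x‖ → f x ≤ D * t^n := by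
    intro n
    induction n with
    | zero =>
      intro x _
      rw [pow_zero, mul_one]
      exact le_trans (hM x) (le_max_left M B)
    | succ n ih =>
      intro x hx
      have hpow1 : (1:ℝ) ≤ 2^(n+1) := one_le_pow₀ one_le_two
      have hpown : (0:ℝ) < 2^n := by positivity
      have hxR : R ≤ ‖x‖ := le_trans (le_mul_of_one_le_left hR0.le hpow1) hx
      have hx6 : 6 ≤ ‖x‖ := le_trans hR6 hxR
      have hx3 : 3 ≤ ‖x‖ := by linarith
      have hv : C₁ * v x ≤ ε := hvR x hxR
      have hS : sSup (f '' ball x (‖x‖/2)) ≤ D * t^n := by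
        refine Real.sSup_le ?_ (le_of_lt (mul_pos hD (pow_pos ht0 n)))
        rintro _ ⟨y, hy, rfl⟩
        refine ih y ?_
        rw [mem_ball, dist_eq_norm] at hy
        have h1 : ‖x‖ - ‖y‖ ≤ ‖y - x‖ := by
          calc ‖x‖ - ‖y‖ ≤ ‖x - y‖ := norm_sub_norm_le _ _
            _ = ‖y - x‖ := norm_sub_rev _ _
        have h2 : ‖x‖/2 ≤ ‖y‖ := by linarith
        have h3 : (2:ℝ)^(n+1) * R = 2 * (2^n * R) := by ring
        rw [h3] at hx
        linarith
      have hJx : ∫ z in (ball x (‖x‖ / 2))ᶜ, f z * ‖z - x‖ ^ (-(d : ℝ) - α) ∂volume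
          ≤ B * t^(n+1) := by
        refine le_trans (hJ x hx6) ?_
        refine mul_le_mul_of_nonneg_left ?_ hB.le
        calc ‖x‖ ^ (-γ) ≤ ((2:ℝ)^(n+1) * R) ^ (-γ) := by
              refine Real.rpow_le_rpow_of_nonpos (by positivity) hx (by linarith)
          _ = ((2:ℝ)^(n+1)) ^ (-γ) * R ^ (-γ) :=
              Real.mul_rpow (by positivity) hR0.le
          _ ≤ ((2:ℝ)^(n+1)) ^ (-γ) * 1 := by
              refine mul_le_mul_of_nonneg_left
                (Real.rpow_le_one_of_one_le_of_nonpos hR1 (by linarith))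
                (Real.rpow_nonneg (by positivity) _)
          _ = t^(n+1) := by rw [mul_one, hpow]
      have hsum_nonneg : 0 ≤ sSup (f '' ball x (‖x‖/2)) +
          ∫ z in (ball x (‖x‖ / 2))ᶜ, f z * ‖z - x‖ ^ (-(d : ℝ) - α) ∂volume :=
        add_nonneg (hSup_nonneg x hx3) (hJ_nonneg x)
      have hBt : B * t^(n+1) ≤ D * t^n := by
        have h1 : t^(n+1) = t^n * t := pow_succ t n
        have h2 : B * (t^n * t) ≤ B * (t^n * 1) := by
          refine mul_le_mul_of_nonneg_left ?_ hB.le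
          exact mul_le_mul_of_nonneg_left ht1 (pow_nonneg ht0.le n)
        rw [h1]
        calc B * (t^n * t) ≤ B * (t^n * 1) := h2
          _ = B * t^n := by ring
          _ ≤ D * t^n := mul_le_mul_of_nonneg_right (le_max_right M B) (pow_nonneg ht0.le n)
      have hεt : ε * 2 = t := by
        rw [hεdef, htdef, ← Real.rpow_add_one two_pos.ne' (-γ - 1)]
        norm_num
      calc f x ≤ C₁ * v x * (sSup (f '' ball x (‖x‖/2)) +
            ∫ z in (ball x (‖x‖ / 2))ᶜ, f z * ‖z - x‖ ^ (-(d : ℝ) - α) ∂volume) := hrec x hx3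
        _ ≤ ε * (sSup (f '' ball x (‖x‖/2)) +
            ∫ z in (ball x (‖x‖ / 2))ᶜ, f z * ‖z - x‖ ^ (-(d : ℝ) - α) ∂volume) :=
            mul_le_mul_of_nonneg_right hv hsum_nonneg
        _ ≤ ε * (D * t^n + B * t^(n+1)) := by
            refine mul_le_mul_of_nonneg_left (add_le_add hS hJx) hε0.le
        _ ≤ ε * (D * t^n + D * t^n) := by
            refine mul_le_mul_of_nonneg_left (add_le_add le_rfl hBt) hε0.le
        _ = (ε * 2) * (D * t^n) := by ring
        _ = t * (D * t^n) := by rw [hεt]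
        _ = D * t^(n+1) := by rw [pow_succ]; ring
  -- conversion
  refine ⟨max (M * R ^ γ) (D * (2 ^ γ * R ^ γ)) + 1, ?_, fun x hx3 => ?_⟩
  · have h1 : 0 ≤ M * R ^ γ := mul_nonneg hM0 (Real.rpow_nonneg hR0.le _)
    have := le_max_left (M * R ^ γ) (D * (2 ^ γ * R ^ γ))
    linarith
  · have hx0 : (0:ℝ) < ‖x‖ := by linarith
    have hxg0 : (0:ℝ) ≤ ‖x‖ ^ (-γ) := Real.rpow_nonneg hx0.le _
    have hRg : R ^ γ * R ^ (-γ) = 1 := by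
      rw [← Real.rpow_add hR0]; simp
    rcases lt_or_ge ‖x‖ R with hcase | hcase
    · -- small case
      have h1 : R ^ (-γ) ≤ ‖x‖ ^ (-γ) :=
        Real.rpow_le_rpow_of_nonpos hx0 hcase.le (by linarith)
      have h2 : (1:ℝ) ≤ R ^ γ * ‖x‖ ^ (-γ) := by
        calc (1:ℝ) = R ^ γ * R ^ (-γ) := hRg.symm
          _ ≤ R ^ γ * ‖x‖ ^ (-γ) :=
            mul_le_mul_of_nonneg_left h1 (Real.rpow_nonneg hR0.le _)
      calc f x ≤ M := hM x
        _ ≤ M * (R ^ γ * ‖x‖ ^ (-γ)) := le_mul_of_one_le_right hM0 h2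
        _ = (M * R ^ γ) * ‖x‖ ^ (-γ) := by ring
        _ ≤ (max (M * R ^ γ) (D * (2 ^ γ * R ^ γ)) + 1) * ‖x‖ ^ (-γ) := by
            refine mul_le_mul_of_nonneg_right ?_ hxg0
            have := le_max_left (M * R ^ γ) (D * (2 ^ γ * R ^ γ))
            linarith
    · -- large case
      set q : ℝ := ‖x‖ / R with hq
      have hq1 : (1:ℝ) ≤ q := (one_le_div hR0).2 hcase
      have hq0 : (0:ℝ) < q := by linarith
      set n : ℕ := ⌊Real.logb 2 q⌋₊ with hn
      have hlog0 : 0 ≤ Real.logb 2 q := Real.logb_nonneg one_lt_two hq1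
      have hqlog : (2:ℝ) ^ Real.logb 2 q = q := Real.rpow_logb two_pos (by norm_num) hq0
      have hlow : (2:ℝ)^n ≤ q := by
        calc ((2:ℝ)^n : ℝ) = (2:ℝ) ^ (n:ℝ) := by rw [Real.rpow_natCast]
          _ ≤ (2:ℝ) ^ Real.logb 2 q :=
            Real.rpow_le_rpow_of_exponent_le one_le_two (Nat.floor_le hlog0)
          _ = q := hqlog
      have hhigh : q < (2:ℝ)^(n+1) := by
        calc q = (2:ℝ) ^ Real.logb 2 q := hqlog.symm
          _ < (2:ℝ) ^ ((n:ℝ)+1) := by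
            refine Real.rpow_lt_rpow_of_exponent_lt one_lt_two ?_
            have hfl := Nat.lt_floor_add_one (Real.logb 2 q)
            rw [hn]; push_cast; exact hfl
          _ = (2:ℝ)^(n+1) := by
            rw [← Real.rpow_natCast (2:ℝ) (n+1)]; push_cast; ring_nf
      have hxn : 2^n * R ≤ ‖x‖ := by
        rw [hq] at hlow
        calc (2:ℝ)^n * R ≤ (‖x‖/R) * R := mul_le_mul_of_nonneg_right hlow hR0.le
          _ = ‖x‖ := by field_simp
      have hfx := Q n x hxn
      have htn : t^n ≤ 2 ^ γ * q ^ (-γ) := by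
        have h1 : ((2:ℝ)^(n+1)) ^ (-γ) ≤ q ^ (-γ) :=
          Real.rpow_le_rpow_of_nonpos hq0 hhigh.le (by linarith)
        have h2 : ((2:ℝ)^(n+1)) ^ (-γ) = t^(n+1) := hpow (n+1)
        have h3 : t^(n+1) = t^n * t := pow_succ t n
        have h4 : t^n = t^(n+1) * t⁻¹ := by
          rw [h3]; field_simp
        have h5 : t⁻¹ = 2 ^ γ := by
          rw [htdef, ← Real.rpow_neg two_pos.le]; simp
        rw [h4, h5, h2.symm] at *
        calc ((2:ℝ)^(n+1)) ^ (-γ) * 2 ^ γ ≤ q ^ (-γ) * 2 ^ γ :=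
            mul_le_mul_of_nonneg_right h1 (Real.rpow_nonneg two_pos.le _)
          _ = 2 ^ γ * q ^ (-γ) := mul_comm _ _
      have hqg : q ^ (-γ) = R ^ γ * ‖x‖ ^ (-γ) := by
        rw [hq, Real.div_rpow (norm_nonneg x) hR0.le, Real.rpow_neg hR0.le,
          div_inv_eq_mul]
        ring
      calc f x ≤ D * t^n := hfx
        _ ≤ D * (2 ^ γ * q ^ (-γ)) := mul_le_mul_of_nonneg_left htn hD.le
        _ = D * (2 ^ γ * R ^ γ) * ‖x‖ ^ (-γ) := by rw [hqg]; ring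
        _ ≤ (max (M * R ^ γ) (D * (2 ^ γ * R ^ γ)) + 1) * ‖x‖ ^ (-γ) := by
            refine mul_le_mul_of_nonneg_right ?_ hxg0
            have := le_max_right (M * R ^ γ) (D * (2 ^ γ * R ^ γ))
            linarith


lemma my_stage (hd : 1 ≤ d) {α : ℝ} (hα : α ∈ Set.Ioo (0:ℝ) 2)
    (v f : EuclideanSpace ℝ (Fin d) → ℝ)
    (hv_nonneg : ∀ x, 0 ≤ v x)
    (hv_lim : Tendsto v (cocompact (EuclideanSpace ℝ (Fin d))) (nhds 0))
    (hf_nonneg : ∀ x, 0 ≤ f x) (hf_meas : Measurable f)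
    {M : ℝ} (hM : ∀ x, f x ≤ M) (hM0 : 0 ≤ M)
    {C₁ : ℝ} (hC₁ : 0 < C₁)
    (hrec : ∀ x : EuclideanSpace ℝ (Fin d), 3 ≤ ‖x‖ →
      f x ≤ C₁ * v x * (sSup (f '' ball x (‖x‖ / 2)) +
        ∫ z in (ball x (‖x‖ / 2))ᶜ, f z * ‖z - x‖ ^ (-(d : ℝ) - α) ∂volume))
    {β K : ℝ} (hβ0 : 0 ≤ β) (hK : 0 ≤ K)
    (hP : ∀ z : EuclideanSpace ℝ (Fin d), 3 ≤ ‖z‖ → f z ≤ K * ‖z‖ ^ (-β)) :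
    ∃ K' : ℝ, 0 < K' ∧ ∀ z : EuclideanSpace ℝ (Fin d), 3 ≤ ‖z‖ →
      f z ≤ K' * ‖z‖ ^ (-(min (β+α) ((d:ℝ)+α/2))) := by
  obtain ⟨hα0, hα2⟩ := hα
  have hd1 : (1:ℝ) ≤ (d:ℝ) := by exact_mod_cast hd
  have hγ0 : 0 ≤ min (β+α) ((d:ℝ)+α/2) := le_min (by linarith) (by linarith)
  obtain ⟨Cm, hCm0, hmass⟩ := my_mass hd ⟨hα0, hα2⟩ f hf_nonneg hf_meas hM hM0 hβ0 hK hP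
  have hexp : (d:ℝ) - min β ((d:ℝ)-α/2) = (d:ℝ) + α - min (β+α) ((d:ℝ)+α/2) := by
    rcases le_total β ((d:ℝ)-α/2) with h | h
    · rw [min_eq_left h, min_eq_left (by linarith)]; ring
    · rw [min_eq_right h, min_eq_right (by linarith)]; ring
  have mb : ∀ r : ℝ, 3 ≤ r → ∫ z in ball (0:EuclideanSpace ℝ (Fin d)) r, f z
      ≤ Cm * r ^ ((d:ℝ) + α - min (β+α) ((d:ℝ)+α/2)) := by
    intro r hr
    rw [← hexp]
    exact hmass r hr
  obtain ⟨B, hB0, hJ⟩ := my_J hd ⟨hα0, hα2⟩ f hf_nonneg hf_meas hM hM0 hγ0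
    (min_le_left _ _) hβ0 hK hCm0 hP mb
  exact my_core hd ⟨hα0, hα2⟩ v f hv_nonneg hv_lim hf_nonneg hM hM0 hC₁ hrec hγ0 hB0 hJ

end aux

set_option maxHeartbeats 2000000 in
/-- Lemma 2.4 (abstract form): if a bounded nonnegative measurable `f` satisfies the
recursive inequality driven by a bounded function `v` vanishing at infinity, then
`f x ≤ C₂ v x |x|^{-d-α}` for `|x| ≥ 3`. -/
theorem stmt_2 (d : ℕ) (hd : 1 ≤ d) (α : ℝ) (hα : α ∈ Set.Ioo (0 : ℝ) 2)
    (v f : EuclideanSpace ℝ (Fin d) → ℝ)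
    (hv_nonneg : ∀ x, 0 ≤ v x) (hv_bdd : ∃ M : ℝ, ∀ x, v x ≤ M)
    (hv_lim : Tendsto v (cocompact (EuclideanSpace ℝ (Fin d))) (nhds 0))
    (hf_nonneg : ∀ x, 0 ≤ f x) (hf_bdd : ∃ M : ℝ, ∀ x, f x ≤ M)
    (hf_meas : Measurable f)
    (C₁ : ℝ) (hC₁ : 0 < C₁)
    (hrec : ∀ x : EuclideanSpace ℝ (Fin d), 3 ≤ ‖x‖ →
      f x ≤ C₁ * v x * (sSup (f '' Metric.ball x (‖x‖ / 2)) +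
        ∫ z in (Metric.ball x (‖x‖ / 2))ᶜ, f z * ‖z - x‖ ^ (-(d : ℝ) - α) ∂volume)) :
    ∃ C₂ : ℝ, 0 < C₂ ∧ ∀ x : EuclideanSpace ℝ (Fin d), 3 ≤ ‖x‖ →
      f x ≤ C₂ * v x * ‖x‖ ^ (-(d : ℝ) - α) := by
  obtain ⟨hα0, hα2⟩ := id hα
  have hd1 : (1:ℝ) ≤ (d:ℝ) := by exact_mod_cast hd
  obtain ⟨Mf, hMf⟩ := hf_bdd
  set M : ℝ := max Mf 1 with hMdef
  have hM : ∀ x, f x ≤ M := fun x => (hMf x).trans (le_max_left _ _)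
  have hM0 : (0:ℝ) ≤ M := le_trans zero_le_one (le_max_right _ _)
  have habsf : ∀ x, |f x| ≤ M := fun x => by
    rw [abs_of_nonneg (hf_nonneg x)]; exact hM x
  -- bootstrap
  have boot : ∀ k : ℕ, ∃ K : ℝ, 0 ≤ K ∧ ∀ z : EuclideanSpace ℝ (Fin d), 3 ≤ ‖z‖ →
      f z ≤ K * ‖z‖ ^ (-(min ((k:ℝ)*α) ((d:ℝ)+α/2))) := by
    intro k
    induction k with
    | zero =>
      refine ⟨M, hM0, fun z hz => ?_⟩
      have h1 : min (((0:ℕ):ℝ)*α) ((d:ℝ)+α/2) = 0 := by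
        rw [Nat.cast_zero, zero_mul]
        exact min_eq_left (by linarith)
      rw [h1, neg_zero, Real.rpow_zero, mul_one]
      exact hM z
    | succ k ih =>
      obtain ⟨K, hK0, hP⟩ := ih
      have hβ0 : 0 ≤ min ((k:ℝ)*α) ((d:ℝ)+α/2) := le_min (by positivity) (by linarith)
      obtain ⟨K', hK'0, hP'⟩ := my_stage hd hα v f hv_nonneg hv_lim hf_nonneg hf_meas
        hM hM0 hC₁ hrec hβ0 hK0 hP
      refine ⟨K', hK'0.le, fun z hz => ?_⟩
      have hmin : min (min ((k:ℝ)*α) ((d:ℝ)+α/2) + α) ((d:ℝ)+α/2)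
          = min (((k+1:ℕ):ℝ)*α) ((d:ℝ)+α/2) := by
        push_cast
        rcases le_total ((k:ℝ)*α) ((d:ℝ)+α/2) with h | h
        · rw [min_eq_left h, show ((k:ℝ)+1)*α = (k:ℝ)*α + α by ring]
        · rw [min_eq_right h, min_eq_right (by linarith), min_eq_right (by nlinarith)]
      have := hP' z hz
      rwa [hmin] at this
  -- reach exponent d + α/2
  obtain ⟨k₀, hk₀⟩ := exists_nat_ge (((d:ℝ)+α/2)/α)
  have hk₀α : (d:ℝ)+α/2 ≤ (k₀:ℝ)*α := by
    rw [div_le_iff₀ hα0] at hk₀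
    linarith
  obtain ⟨K3, hK30, hP3⟩ := boot k₀
  rw [min_eq_right hk₀α] at hP3
  -- integrability of f
  have hs2d : (d:ℝ) < (d:ℝ)+α/2 := by linarith
  have hs20 : (0:ℝ) < (d:ℝ)+α/2 := by linarith
  have hint_f : Integrable f volume := by
    have h1 : IntegrableOn f (ball (0:EuclideanSpace ℝ (Fin d)) 3) volume :=
      my_ball_int f hf_meas habsf 3
    have hker : IntegrableOn
        (fun z : EuclideanSpace ℝ (Fin d) => K3 * ‖z - 0‖ ^ (-((d:ℝ)+α/2)))
        (ball (0:EuclideanSpace ℝ (Fin d)) 3)ᶜ volume :=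
      (my_ker_int hs2d hs20 (0:EuclideanSpace ℝ (Fin d)) three_pos).const_mul K3
    have h2 : IntegrableOn f (ball (0:EuclideanSpace ℝ (Fin d)) 3)ᶜ volume := by
      refine hker.mono' hf_meas.aestronglyMeasurable ?_
      rw [ae_restrict_iff' measurableSet_ball.compl]
      refine ae_of_all _ fun z hz => ?_
      have h3 : 3 ≤ ‖z‖ := by
        simpa [mem_ball, dist_zero_right] using hz
      rw [Real.norm_eq_abs, abs_of_nonneg (hf_nonneg z), sub_zero]
      exact hP3 z h3
    rw [← integrableOn_univ, ← Set.union_compl_self (ball (0:EuclideanSpace ℝ (Fin d)) 3)]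
    exact h1.union h2
  set L : ℝ := ∫ z, f z with hLdef
  have hL0 : 0 ≤ L := integral_nonneg hf_nonneg
  have mbB : ∀ r : ℝ, 3 ≤ r → ∫ z in ball (0:EuclideanSpace ℝ (Fin d)) r, f z
      ≤ (L+1) * r ^ ((d:ℝ) + α - ((d:ℝ)+α)) := by
    intro r hr
    have h1 : ∫ z in ball (0:EuclideanSpace ℝ (Fin d)) r, f z ≤ L :=
      setIntegral_le_integral hint_f (ae_of_all _ hf_nonneg)
    simp only [sub_self, Real.rpow_zero, mul_one]
    linarith
  obtain ⟨B5, hB50, hJ5⟩ := my_J hd hα f hf_nonneg hf_meas hM hM0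
    (γ := (d:ℝ)+α) (K := K3) (Cm := L+1) (βt := (d:ℝ)+α/2)
    (by linarith) (by linarith) (by linarith) hK30 (by linarith) hP3 mbB
  obtain ⟨K6, hK60, hP6⟩ := my_core hd hα v f hv_nonneg hv_lim hf_nonneg hM hM0 hC₁ hrec
    (by linarith : (0:ℝ) ≤ (d:ℝ)+α) hB50 hJ5
  -- final step
  set I₀ : ℝ := ∫ z in (ball (0:EuclideanSpace ℝ (Fin d)) 1)ᶜ, ‖z‖ ^ (-((d:ℝ)+α)) with hI₀def
  have hI₀0 : 0 ≤ I₀ :=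
    setIntegral_nonneg measurableSet_ball.compl (fun z _ => Real.rpow_nonneg (norm_nonneg _) _)
  have h2s : (0:ℝ) < 2 ^ ((d:ℝ)+α) := Real.rpow_pos_of_pos two_pos _
  have h6s : (0:ℝ) < 6 ^ ((d:ℝ)+α) := Real.rpow_pos_of_pos (by norm_num) _
  set C₂ : ℝ := C₁ * (K6 * 2 ^ ((d:ℝ)+α) + B5) + C₁ * ((M + M*I₀) * 6 ^ ((d:ℝ)+α)) with hC₂def
  have hC₂1 : 0 < C₁ * (K6 * 2 ^ ((d:ℝ)+α) + B5) :=
    mul_pos hC₁ (add_pos (mul_pos hK60 h2s) hB50)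
  have hC₂2 : 0 ≤ C₁ * ((M + M*I₀) * 6 ^ ((d:ℝ)+α)) :=
    mul_nonneg hC₁.le (mul_nonneg (add_nonneg hM0 (mul_nonneg hM0 hI₀0)) h6s.le)
  have hbddf : ∀ (x : EuclideanSpace ℝ (Fin d)) (r : ℝ), BddAbove (f '' ball x r) := by
    intro x r
    refine ⟨M, ?_⟩
    rintro _ ⟨y, _, rfl⟩
    exact hM y
  refine ⟨C₂, by linarith, fun x hx3 => ?_⟩
  have hx0 : (0:ℝ) < ‖x‖ := by linarith
  have hxs0 : (0:ℝ) ≤ ‖x‖ ^ (-(d:ℝ) - α) := Real.rpow_nonneg hx0.le _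
  have hvx0 : 0 ≤ C₁ * v x := mul_nonneg hC₁.le (hv_nonneg x)
  have hexp : -(d:ℝ) - α = -((d:ℝ)+α) := by ring
  have hJ_nonneg : 0 ≤ ∫ z in (ball x (‖x‖ / 2))ᶜ, f z * ‖z - x‖ ^ (-(d : ℝ) - α) ∂volume :=
    setIntegral_nonneg measurableSet_ball.compl
      (fun z _ => mul_nonneg (hf_nonneg z) (Real.rpow_nonneg (norm_nonneg _) _))
  have hS_nonneg : 0 ≤ sSup (f '' ball x (‖x‖/2)) := by
    have hx0' : x ∈ ball x (‖x‖/2) := mem_ball_self (by linarith)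
    exact le_trans (hf_nonneg x) (le_csSup (hbddf x _) ⟨x, hx0', rfl⟩)
  rcases le_or_gt 6 ‖x‖ with hx6 | hx6
  · -- large x
    have hS : sSup (f '' ball x (‖x‖/2)) ≤ K6 * (2 ^ ((d:ℝ)+α) * ‖x‖ ^ (-((d:ℝ)+α))) := by
      refine Real.sSup_le ?_ (by positivity)
      rintro _ ⟨y, hy, rfl⟩
      rw [mem_ball, dist_eq_norm] at hy
      have h1 : ‖x‖ - ‖y‖ ≤ ‖y - x‖ := by
        calc ‖x‖ - ‖y‖ ≤ ‖x - y‖ := norm_sub_norm_le _ _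
          _ = ‖y - x‖ := norm_sub_rev _ _
      have h2 : ‖x‖/2 ≤ ‖y‖ := by linarith
      have h3 : 3 ≤ ‖y‖ := by linarith
      calc f y ≤ K6 * ‖y‖ ^ (-((d:ℝ)+α)) := hP6 y h3
        _ ≤ K6 * (‖x‖/2) ^ (-((d:ℝ)+α)) := by
            refine mul_le_mul_of_nonneg_left ?_ hK60.le
            exact Real.rpow_le_rpow_of_nonpos (by linarith) h2 (by linarith)
        _ = K6 * (2 ^ ((d:ℝ)+α) * ‖x‖ ^ (-((d:ℝ)+α))) := by
            rw [Real.div_rpow (norm_nonneg x) two_pos.le, Real.rpow_neg two_pos.le,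
              div_inv_eq_mul]
            ring
    have hJx := hJ5 x hx6
    calc f x ≤ C₁ * v x * (sSup (f '' ball x (‖x‖/2)) +
          ∫ z in (ball x (‖x‖ / 2))ᶜ, f z * ‖z - x‖ ^ (-(d : ℝ) - α) ∂volume) := hrec x hx3
      _ ≤ C₁ * v x * (K6 * (2 ^ ((d:ℝ)+α) * ‖x‖ ^ (-((d:ℝ)+α)))
            + B5 * ‖x‖ ^ (-((d:ℝ)+α))) :=
          mul_le_mul_of_nonneg_left (add_le_add hS hJx) hvx0
      _ = (C₁ * (K6 * 2 ^ ((d:ℝ)+α) + B5)) * v x * ‖x‖ ^ (-((d:ℝ)+α)) := by ring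
      _ ≤ C₂ * v x * ‖x‖ ^ (-((d:ℝ)+α)) := by
          refine mul_le_mul_of_nonneg_right ?_ (Real.rpow_nonneg hx0.le _)
          refine mul_le_mul_of_nonneg_right ?_ (hv_nonneg x)
          rw [hC₂def]
          linarith
      _ = C₂ * v x * ‖x‖ ^ (-(d:ℝ) - α) := by rw [hexp]
  · -- small x
    set r : ℝ := ‖x‖/2 with hrdef
    have hr0 : (0:ℝ) < r := by rw [hrdef]; linarith
    have hr1 : (1:ℝ) ≤ r := by rw [hrdef]; linarith
    have hS : sSup (f '' ball x (‖x‖/2)) ≤ M :=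
      Real.sSup_le (by rintro _ ⟨y, _, rfl⟩; exact hM y) hM0
    have hker_int : IntegrableOn
        (fun z : EuclideanSpace ℝ (Fin d) => ‖z - x‖ ^ (-((d:ℝ)+α))) (ball x r)ᶜ volume :=
      my_ker_int (by linarith) (by linarith) x hr0
    have hprod_meas : Measurable fun z : EuclideanSpace ℝ (Fin d) =>
        f z * ‖z - x‖ ^ (-((d:ℝ)+α)) := by
      apply hf_meas.mul; fun_prop
    have hprod_int : IntegrableOn
        (fun z : EuclideanSpace ℝ (Fin d) => f z * ‖z - x‖ ^ (-((d:ℝ)+α)))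
        (ball x r)ᶜ volume := by
      refine (hker_int.const_mul M).mono' hprod_meas.aestronglyMeasurable ?_
      rw [ae_restrict_iff' measurableSet_ball.compl]
      refine ae_of_all _ fun z _ => ?_
      rw [Real.norm_eq_abs,
        abs_of_nonneg (mul_nonneg (hf_nonneg z) (Real.rpow_nonneg (norm_nonneg _) _))]
      exact mul_le_mul_of_nonneg_right (hM z) (Real.rpow_nonneg (norm_nonneg _) _)
    have hJx : ∫ z in (ball x (‖x‖ / 2))ᶜ, f z * ‖z - x‖ ^ (-(d : ℝ) - α) ∂volume
        ≤ M * I₀ := by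
      have he : ∀ z : EuclideanSpace ℝ (Fin d),
          f z * ‖z - x‖ ^ (-(d:ℝ) - α) = f z * ‖z - x‖ ^ (-((d:ℝ)+α)) := by
        intro z; rw [hexp]
      simp_rw [he]
      have h1 : ∫ z in (ball x r)ᶜ, f z * ‖z - x‖ ^ (-((d:ℝ)+α))
          ≤ ∫ z in (ball x r)ᶜ, M * ‖z - x‖ ^ (-((d:ℝ)+α)) := by
        refine setIntegral_mono_on hprod_int (hker_int.const_mul M)
          measurableSet_ball.compl (fun z _ => ?_)
        exact mul_le_mul_of_nonneg_right (hM z) (Real.rpow_nonneg (norm_nonneg _) _)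
      have h2 : ∫ z in (ball x r)ᶜ, M * ‖z - x‖ ^ (-((d:ℝ)+α))
          = M * (r ^ ((d:ℝ) - ((d:ℝ)+α)) * I₀) := by
        rw [integral_const_mul, my_compl_val hr0 x, hI₀def]
      have h3 : r ^ ((d:ℝ) - ((d:ℝ)+α)) ≤ 1 := by
        refine Real.rpow_le_one_of_one_le_of_nonpos hr1 (by linarith)
      have h4 : M * (r ^ ((d:ℝ) - ((d:ℝ)+α)) * I₀) ≤ M * I₀ := by
        refine mul_le_mul_of_nonneg_left ?_ hM0
        nlinarith [hI₀0]
      exact le_trans h1 (le_trans (le_of_eq h2) h4)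
    have h16 : (1:ℝ) ≤ 6 ^ ((d:ℝ)+α) * ‖x‖ ^ (-((d:ℝ)+α)) := by
      have h1 : (6:ℝ) ^ (-((d:ℝ)+α)) ≤ ‖x‖ ^ (-((d:ℝ)+α)) :=
        Real.rpow_le_rpow_of_nonpos hx0 hx6.le (by linarith)
      have h2 : (6:ℝ) ^ ((d:ℝ)+α) * 6 ^ (-((d:ℝ)+α)) = 1 := by
        rw [← Real.rpow_add (by norm_num : (0:ℝ) < 6),
          show (d:ℝ) + α + -((d:ℝ)+α) = 0 by ring, Real.rpow_zero]
      calc (1:ℝ) = 6 ^ ((d:ℝ)+α) * 6 ^ (-((d:ℝ)+α)) := h2.symm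
        _ ≤ 6 ^ ((d:ℝ)+α) * ‖x‖ ^ (-((d:ℝ)+α)) := mul_le_mul_of_nonneg_left h1 h6s.le
    calc f x ≤ C₁ * v x * (sSup (f '' ball x (‖x‖/2)) +
          ∫ z in (ball x (‖x‖ / 2))ᶜ, f z * ‖z - x‖ ^ (-(d : ℝ) - α) ∂volume) := hrec x hx3
      _ ≤ C₁ * v x * (M + M * I₀) :=
          mul_le_mul_of_nonneg_left (add_le_add hS hJx) hvx0
      _ ≤ C₁ * v x * (M + M * I₀) * (6 ^ ((d:ℝ)+α) * ‖x‖ ^ (-((d:ℝ)+α))) := by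
          refine le_mul_of_one_le_right ?_ h16
          exact mul_nonneg hvx0 (add_nonneg hM0 (mul_nonneg hM0 hI₀0))
      _ = (C₁ * ((M + M*I₀) * 6 ^ ((d:ℝ)+α))) * v x * ‖x‖ ^ (-((d:ℝ)+α)) := by ring
      _ ≤ C₂ * v x * ‖x‖ ^ (-((d:ℝ)+α)) := by
          refine mul_le_mul_of_nonneg_right ?_ (Real.rpow_nonneg hx0.le _)
          refine mul_le_mul_of_nonneg_right ?_ (hv_nonneg x)
          rw [hC₂def]
          linarith
      _ = C₂ * v x * ‖x‖ ^ (-(d:ℝ) - α) := by rw [hexp]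
end

section
/- Let β > 0, C > 0, c ≥ 0 and R > 0. Let g : (0,∞) → [0,∞) be nondecreasing, satisfy g(s) ≤ C s^β for all s > 0, and satisfy g(2s) ≥ 2^{β+1} ( g(s) − c ) for all s ≥ R. Then g is bounded on (0,∞). -/
/-- Doubling-iteration boundedness: if `g : (0,∞) → [0,∞)` is nondecreasing, grows at
most like `C s^β`, and satisfies `g(2s) ≥ 2^{β+1}(g(s) - c)` for `s ≥ R`, then `g` is
bounded on `(0,∞)`. -/
theorem stmt_3 (β C c R : ℝ) (hβ : 0 < β) (hC : 0 < C) (hc : 0 ≤ c) (hR : 0 < R)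
    (g : ℝ → ℝ) (hg_nonneg : ∀ s, 0 < s → 0 ≤ g s)
    (hg_mono : ∀ s t, 0 < s → s ≤ t → g s ≤ g t)
    (hg_grow : ∀ s, 0 < s → g s ≤ C * s ^ β)
    (hg_double : ∀ s, R ≤ s → 2 ^ (β + 1) * (g s - c) ≤ g (2 * s)) :
    ∃ M : ℝ, ∀ s, 0 < s → g s ≤ M := by
  set a : ℝ := (2 : ℝ) ^ β with ha_def
  have ha1 : (1 : ℝ) ≤ a := Real.one_le_rpow (by norm_num) hβ.le
  have ha0 : (0 : ℝ) < a := lt_of_lt_of_le one_pos ha1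
  set q : ℝ := (3 / 2) * a with hq_def
  have hq1 : (1 : ℝ) ≤ q := by nlinarith
  have h2β1 : (2 : ℝ) ^ (β + 1) = 2 * a := by
    rw [Real.rpow_add (by norm_num), Real.rpow_one]; ring
  -- Main claim: g s ≤ 4c for s ≥ R
  have key : ∀ s, R ≤ s → g s ≤ 4 * c := by
    intro s hs
    by_contra h
    push_neg at h
    have hs0 : 0 < s := lt_of_lt_of_le hR hs
    have hgs0 : 0 < g s := lt_of_le_of_lt (by linarith) h
    -- induction claim
    have iter : ∀ n : ℕ, q ^ n * g s ≤ g (2 ^ n * s) := by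
      intro n
      induction n with
      | zero => simp
      | succ n ih =>
        have h2n : (1 : ℝ) ≤ 2 ^ n := one_le_pow₀ (by norm_num)
        have hRn : R ≤ 2 ^ n * s := le_trans hs (le_mul_of_one_le_left hs0.le h2n)
        have hgn : g s ≤ g (2 ^ n * s) := by
          have := ih
          nlinarith [one_le_pow₀ hq1 (n := n), hg_nonneg s hs0]
        have hd := hg_double (2 ^ n * s) hRn
        have heq : (2 : ℝ) * (2 ^ n * s) = 2 ^ (n + 1) * s := by ring
        rw [heq, h2β1] at hd
        have hX : 4 * c < g (2 ^ n * s) := lt_of_lt_of_le h hgn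
        calc q ^ (n + 1) * g s = q * (q ^ n * g s) := by ring
          _ ≤ q * g (2 ^ n * s) := by
              apply mul_le_mul_of_nonneg_left ih (by linarith)
          _ ≤ 2 * a * (g (2 ^ n * s) - c) := by
              rw [hq_def]; nlinarith
          _ ≤ g (2 ^ (n + 1) * s) := hd
    -- growth bound
    have bound : ∀ n : ℕ, (3 / 2 : ℝ) ^ n * g s ≤ C * s ^ β := by
      intro n
      have h2ns : (0 : ℝ) < 2 ^ n * s := by positivity
      have han : ((2 : ℝ) ^ n) ^ β = a ^ n := by
        rw [ha_def, ← Real.rpow_natCast (2 : ℝ) n, ← Real.rpow_mul (by norm_num),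
          mul_comm, Real.rpow_mul (by norm_num), Real.rpow_natCast]
      have h1 := le_trans (iter n) (hg_grow _ h2ns)
      rw [Real.mul_rpow (by positivity) hs0.le, han] at h1
      have h2 : q ^ n * g s = a ^ n * ((3 / 2) ^ n * g s) := by
        rw [hq_def, mul_pow]; ring
      have han0 : (0 : ℝ) < a ^ n := pow_pos ha0 n
      rw [h2] at h1
      have h3 : a ^ n * ((3 / 2) ^ n * g s) ≤ a ^ n * (C * s ^ β) := by nlinarith [h1]
      exact le_of_mul_le_mul_left h3 han0
    obtain ⟨n, hn⟩ := pow_unbounded_of_one_lt (C * s ^ β / g s) (by norm_num : (1:ℝ) < 3/2)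
    have := bound n
    rw [div_lt_iff₀ hgs0] at hn
    linarith
  refine ⟨4 * c + g R, fun s hs0 => ?_⟩
  rcases le_total s R with h | h
  · have := hg_mono s R hs0 h
    linarith [key R le_rfl, hg_nonneg R hR]
  · linarith [key s h, hg_nonneg R hR]
end

section
/- Let d ≥ 1 be an integer, α ∈ (0,2), R ≥ 1, c > 0, and let C : (0,∞) → (0,∞) be an arbitrary function. Let h : (0,∞) × ℝ^d → [0,1] be such that x ↦ h(t,x) is Lebesgue measurable for each t > 0, and suppose that for every t > 0 and every x ∈ ℝ^d with |x| ≥ 2R one has h(t,x) ≤ C(t)(1+|x|)^{−d−α} + c ∫_{B(x,|x|/4)^c} h(t/2, y) |y − x|^{−d−α} dy. Then for every t > 0 there exists a constant C'(t) such that h(t,x) ≤ C'(t)(1+|x|)^{−d−α} for all x ∈ ℝ^d. -/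
open MeasureTheory Metric Set Module Real

lemma tail_aux (d : ℕ) (hd : 1 ≤ d) (p : ℝ) (hp : (d : ℝ) < p) (r : ℝ) (hr : 0 < r) :
    IntegrableOn (fun z : EuclideanSpace ℝ (Fin d) => ‖z‖ ^ (-p)) (Metric.ball 0 r)ᶜ volume ∧
    ∫ z in (Metric.ball (0 : EuclideanSpace ℝ (Fin d)) r)ᶜ, ‖z‖ ^ (-p) ∂volume =
      ((d : ℝ) * (volume (Metric.ball (0 : EuclideanSpace ℝ (Fin d)) 1)).toReal) *
        (r ^ ((d : ℝ) - p) / (p - (d : ℝ))) := by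
  haveI : Nonempty (Fin d) := ⟨⟨0, hd⟩⟩
  haveI : Nontrivial (EuclideanSpace ℝ (Fin d)) := inferInstance
  have key : ∫ x : EuclideanSpace ℝ (Fin d), (Set.indicator (Ici r) (fun s : ℝ => s ^ (-p))) ‖x‖ ∂volume
      = (d : ℝ) * (volume (Metric.ball (0 : EuclideanSpace ℝ (Fin d)) 1)).toReal * (r ^ ((d:ℝ) - p) / (p - (d:ℝ))) := by
    rw [MeasureTheory.integral_fun_norm_addHaar (volume : Measure (EuclideanSpace ℝ (Fin d)))
      (Set.indicator (Ici r) (fun s : ℝ => s ^ (-p)))]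
    rw [finrank_euclideanSpace_fin]
    have h1 : ∀ y ∈ Ioi (0:ℝ), y ^ (d - 1) • (Set.indicator (Ici r) (fun s : ℝ => s ^ (-p))) y
        = Set.indicator (Ici r) (fun s : ℝ => s ^ ((d:ℝ) - 1 - p)) y := by
      intro y hy
      by_cases hyr : y ∈ Ici r
      · rw [Set.indicator_of_mem hyr, Set.indicator_of_mem hyr, smul_eq_mul]
        have hy0 : (0:ℝ) < y := hy
        rw [← Real.rpow_natCast y (d-1), ← Real.rpow_add hy0]
        congr 1
        rw [Nat.cast_sub hd]
        push_cast
        ring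
      · rw [Set.indicator_of_notMem hyr, Set.indicator_of_notMem hyr, smul_zero]
    rw [setIntegral_congr_fun measurableSet_Ioi h1, setIntegral_indicator measurableSet_Ici]
    have h2 : Ioi (0:ℝ) ∩ Ici r = Ici r :=
      inter_eq_self_of_subset_right (fun y hy => lt_of_lt_of_le hr hy)
    rw [h2, integral_Ici_eq_integral_Ioi, integral_Ioi_rpow_of_lt (by linarith) hr]
    have h3 : (d:ℝ) - 1 - p + 1 = (d:ℝ) - p := by ring
    rw [h3, nsmul_eq_mul, smul_eq_mul]
    have h4 : -r ^ ((d:ℝ) - p) / ((d:ℝ) - p) = r ^ ((d:ℝ) - p) / (p - (d:ℝ)) := by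
      rw [div_eq_div_iff (by linarith) (by linarith)]
      ring
    rw [h4]
    rw [measureReal_def]
    ring
  have hset : (fun x : EuclideanSpace ℝ (Fin d) => (Set.indicator (Ici r) (fun s : ℝ => s ^ (-p))) ‖x‖)
      = Set.indicator (Metric.ball (0 : EuclideanSpace ℝ (Fin d)) r)ᶜ (fun z => ‖z‖ ^ (-p)) := by
    funext x
    by_cases hx : r ≤ ‖x‖
    · rw [Set.indicator_of_mem (Set.mem_Ici.mpr hx),
        Set.indicator_of_mem (by simpa [Metric.mem_ball, dist_zero_right, not_lt] using hx)]
    · rw [Set.indicator_of_notMem (fun hmem => hx (Set.mem_Ici.mp hmem)),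
        Set.indicator_of_notMem (by simpa [Metric.mem_ball, dist_zero_right, not_lt] using hx)]
  rw [hset] at key
  have hV : 0 < (d:ℝ) * (volume (Metric.ball (0 : EuclideanSpace ℝ (Fin d)) 1)).toReal * (r ^ ((d:ℝ)-p) / (p - (d:ℝ))) := by
    have h1 : 0 < (volume (Metric.ball (0 : EuclideanSpace ℝ (Fin d)) 1)).toReal :=
      ENNReal.toReal_pos (measure_ball_pos volume 0 one_pos).ne' measure_ball_lt_top.ne
    have h2 : 0 < r ^ ((d:ℝ)-p) := Real.rpow_pos_of_pos hr _
    have h3 : (0:ℝ) < d := by exact_mod_cast hd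
    have h4 : 0 < p - (d:ℝ) := by linarith
    positivity
  have hint : Integrable (Set.indicator (Metric.ball (0 : EuclideanSpace ℝ (Fin d)) r)ᶜ fun z => ‖z‖ ^ (-p)) volume := by
    by_contra hcon
    rw [MeasureTheory.integral_undef hcon] at key
    exact hV.ne key
  constructor
  · exact (integrable_indicator_iff measurableSet_ball.compl).mp hint
  · rw [← MeasureTheory.integral_indicator measurableSet_ball.compl]
    exact key

lemma shift_aux (d : ℕ) (hd : 1 ≤ d) (p : ℝ) (hp : (d : ℝ) < p) (x : EuclideanSpace ℝ (Fin d))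
    (r : ℝ) (hr : 0 < r) :
    IntegrableOn (fun y : EuclideanSpace ℝ (Fin d) => ‖y - x‖ ^ (-p)) (Metric.ball x r)ᶜ volume ∧
    ∫ y in (Metric.ball x r)ᶜ, ‖y - x‖ ^ (-p) ∂volume =
      ((d : ℝ) * (volume (Metric.ball (0 : EuclideanSpace ℝ (Fin d)) 1)).toReal) *
        (r ^ ((d : ℝ) - p) / (p - (d : ℝ))) := by
  obtain ⟨hti, htv⟩ := tail_aux d hd p hp r hr
  have hfun : (Set.indicator (Metric.ball x r)ᶜ (fun y => ‖y - x‖ ^ (-p)))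
      = fun y : EuclideanSpace ℝ (Fin d) => Set.indicator (Metric.ball (0 : EuclideanSpace ℝ (Fin d)) r)ᶜ (fun z => ‖z‖ ^ (-p)) (y - x) := by
    funext y
    by_cases hy : y ∈ (Metric.ball x r)ᶜ
    · have hy' : y - x ∈ (Metric.ball (0 : EuclideanSpace ℝ (Fin d)) r)ᶜ := by
        simp only [mem_compl_iff, Metric.mem_ball, dist_eq_norm, dist_zero_right, not_lt] at hy ⊢
        simpa using hy
      rw [Set.indicator_of_mem hy, Set.indicator_of_mem hy']
    · have hy' : y - x ∉ (Metric.ball (0 : EuclideanSpace ℝ (Fin d)) r)ᶜ := by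
        simp only [mem_compl_iff, Metric.mem_ball, dist_eq_norm, dist_zero_right, not_lt,
          not_not, not_le] at hy ⊢
        simpa using hy
      rw [Set.indicator_of_notMem hy, Set.indicator_of_notMem hy']
  have hint : Integrable (Set.indicator (Metric.ball (0 : EuclideanSpace ℝ (Fin d)) r)ᶜ fun z => ‖z‖ ^ (-p)) volume :=
    (integrable_indicator_iff measurableSet_ball.compl).mpr hti
  constructor
  · rw [← integrable_indicator_iff measurableSet_ball.compl]
    rw [hfun]
    exact hint.comp_sub_right x
  · rw [← MeasureTheory.integral_indicator measurableSet_ball.compl, hfun,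
      integral_sub_right_eq_self (fun z : EuclideanSpace ℝ (Fin d) => Set.indicator (Metric.ball (0 : EuclideanSpace ℝ (Fin d)) r)ᶜ
        (fun z => ‖z‖ ^ (-p)) z) x,
      MeasureTheory.integral_indicator measurableSet_ball.compl]
    exact htv

set_option maxHeartbeats 2000000 in
lemma step_aux (d : ℕ) (hd : 1 ≤ d) (α : ℝ) (hα : α ∈ Set.Ioo (0 : ℝ) 2)
    (R : ℝ) (hR : 1 ≤ R) (c : ℝ) (hc : 0 < c)
    (C : ℝ → ℝ) (hC : ∀ t, 0 < t → 0 < C t)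
    (h : ℝ → EuclideanSpace ℝ (Fin d) → ℝ)
    (h01 : ∀ t, 0 < t → ∀ x, h t x ∈ Set.Icc (0 : ℝ) 1)
    (hrec : ∀ t, 0 < t → ∀ x : EuclideanSpace ℝ (Fin d), 2 * R ≤ ‖x‖ →
      h t x ≤ C t * (1 + ‖x‖) ^ (-(d : ℝ) - α) +
        c * ∫ y in (Metric.ball x (‖x‖ / 4))ᶜ,
              h (t / 2) y * ‖y - x‖ ^ (-(d : ℝ) - α) ∂volume)
    (γ γ' σ : ℝ) (hγ0 : 0 ≤ γ) (hγ'0 : 0 ≤ γ') (hγ'da : γ' ≤ (d : ℝ) + α)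
    (hσd : (d : ℝ) < σ) (hγσ : γ ≤ σ) (hσle : σ ≤ γ + (d : ℝ) + α - γ')
    (IH : ∀ t, 0 < t → ∃ K, 0 ≤ K ∧ ∀ x, h t x ≤ K * (1 + ‖x‖) ^ (-γ)) :
    ∀ t, 0 < t → ∃ K, 0 ≤ K ∧ ∀ x, h t x ≤ K * (1 + ‖x‖) ^ (-γ') := by
  obtain ⟨hα0, hα2⟩ := hα
  have hd1 : (1 : ℝ) ≤ d := by exact_mod_cast hd
  intro t ht
  obtain ⟨K, hK0, hKb⟩ := IH (t / 2) (by linarith)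
  -- basic constants
  have hIσint : Integrable (fun y : EuclideanSpace ℝ (Fin d) => (1 + ‖y‖) ^ (-σ)) volume := by
    apply integrable_one_add_norm
    rw [finrank_euclideanSpace_fin]
    exact hσd
  obtain ⟨Iσ, hIσdef⟩ : ∃ I : ℝ, I = ∫ y : EuclideanSpace ℝ (Fin d), (1 + ‖y‖) ^ (-σ) ∂volume :=
    ⟨_, rfl⟩
  have hIσ0 : 0 ≤ Iσ := hIσdef ▸ integral_nonneg fun y => Real.rpow_nonneg (by positivity) _
  set p : ℝ := (d : ℝ) + α with hpdef
  have hdp : (d : ℝ) < p := by rw [hpdef]; linarith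
  have hp0 : 0 < p := by linarith
  obtain ⟨cT, hcTdef⟩ : ∃ v : ℝ,
      v = ((d : ℝ) * (volume (Metric.ball (0 : EuclideanSpace ℝ (Fin d)) 1)).toReal) / α :=
    ⟨_, rfl⟩
  have hcT0 : 0 ≤ cT := by
    rw [hcTdef]
    have h1 : (0:ℝ) ≤ (volume (Metric.ball (0 : EuclideanSpace ℝ (Fin d)) 1)).toReal :=
      ENNReal.toReal_nonneg
    positivity
  obtain ⟨M, hMdef⟩ : ∃ m : ℝ,
      m = C t + c * (K * Iσ * 2 ^ p + K * cT * 2 ^ γ * 4 ^ α) * 2 ^ γ' := ⟨_, rfl⟩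
  refine ⟨max ((1 + 2 * R) ^ γ') M, le_max_of_le_left (by positivity), fun x => ?_⟩
  have h1x : (0:ℝ) < 1 + ‖x‖ := by have := norm_nonneg x; linarith
  have hrp0 : (0:ℝ) ≤ (1 + ‖x‖) ^ (-γ') := Real.rpow_nonneg h1x.le _
  have hexp : -(d : ℝ) - α = -p := by rw [hpdef]; ring
  by_cases hx : 2 * R ≤ ‖x‖
  · -- main case
    have hrec' := hrec t ht x hx
    rw [hexp] at hrec'
    set n : ℝ := ‖x‖ with hndef
    have hn2 : 2 ≤ n := by rw [hndef]; linarith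
    have hn0 : (0:ℝ) < n := by linarith
    set r : ℝ := n / 4 with hrdef
    have hr0 : (0:ℝ) < r := by rw [hrdef]; linarith
    -- tail integral facts
    obtain ⟨htint, htval⟩ := shift_aux d hd p hdp x r hr0
    have htail_val : ∫ y in (Metric.ball x r)ᶜ, ‖y - x‖ ^ (-p) ∂volume = cT * r ^ (-α) := by
      rw [htval]
      have e1 : (d : ℝ) - p = -α := by rw [hpdef]; ring
      have e2 : p - (d : ℝ) = α := by rw [hpdef]; ring
      rw [e1, e2, hcTdef]
      ring
    -- the dominating functions
    set a1 : ℝ := K * (n / 2) ^ (-p) * (1 + n / 2) ^ (σ - γ) with ha1def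
    set a2 : ℝ := K * (1 + n / 2) ^ (-γ) with ha2def
    have hn21 : (0:ℝ) < n / 2 := by linarith
    have h1n2 : (0:ℝ) < 1 + n / 2 := by linarith
    have ha10 : 0 ≤ a1 := by
      have := Real.rpow_nonneg hn21.le (-p)
      have := Real.rpow_nonneg h1n2.le (σ - γ)
      rw [ha1def]; positivity
    have ha20 : 0 ≤ a2 := by
      have := Real.rpow_nonneg h1n2.le (-γ)
      rw [ha2def]; positivity
    have hptwise : ∀ y ∈ (Metric.ball x r)ᶜ,
        h (t / 2) y * ‖y - x‖ ^ (-p) ≤ a1 * (1 + ‖y‖) ^ (-σ) + a2 * ‖y - x‖ ^ (-p) := by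
      intro y hy
      have hyx : r ≤ ‖y - x‖ := by
        simp only [mem_compl_iff, Metric.mem_ball, dist_eq_norm, not_lt] at hy
        exact hy
      have hyx0 : (0:ℝ) < ‖y - x‖ := lt_of_lt_of_le hr0 hyx
      have hh := hKb y
      have hy1 : (0:ℝ) < 1 + ‖y‖ := by have := norm_nonneg y; linarith
      by_cases hcase : ‖y‖ ≤ n / 2
      · have hfar : n / 2 ≤ ‖y - x‖ := by
          have h1 : ‖x‖ - ‖y‖ ≤ ‖x - y‖ := by
            have := norm_sub_norm_le x y
            linarith
          rw [norm_sub_rev x y] at h1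
          rw [← hndef] at *
          linarith
        have h1 : ‖y - x‖ ^ (-p) ≤ (n / 2) ^ (-p) :=
          Real.rpow_le_rpow_of_nonpos hn21 hfar (by linarith)
        have h2 : (1 + ‖y‖) ^ (-γ) ≤ (1 + ‖y‖) ^ (-σ) * (1 + n / 2) ^ (σ - γ) := by
          have e : (1 + ‖y‖) ^ (-γ) = (1 + ‖y‖) ^ (-σ) * (1 + ‖y‖) ^ (σ - γ) := by
            rw [← Real.rpow_add hy1]
            congr 1
            ring
          rw [e]
          exact mul_le_mul_of_nonneg_left
            (Real.rpow_le_rpow hy1.le (by linarith) (by linarith))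
            (Real.rpow_nonneg hy1.le _)
        calc h (t / 2) y * ‖y - x‖ ^ (-p)
            ≤ (K * (1 + ‖y‖) ^ (-γ)) * ((n / 2) ^ (-p)) := by
              apply mul_le_mul hh h1 (Real.rpow_nonneg hyx0.le _)
              exact mul_nonneg hK0 (Real.rpow_nonneg hy1.le _)
          _ ≤ (K * ((1 + ‖y‖) ^ (-σ) * (1 + n / 2) ^ (σ - γ))) * ((n / 2) ^ (-p)) := by
              apply mul_le_mul_of_nonneg_right (mul_le_mul_of_nonneg_left h2 hK0)
                (Real.rpow_nonneg hn21.le _)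
          _ = a1 * (1 + ‖y‖) ^ (-σ) := by rw [ha1def]; ring
          _ ≤ a1 * (1 + ‖y‖) ^ (-σ) + a2 * ‖y - x‖ ^ (-p) :=
              le_add_of_nonneg_right (mul_nonneg ha20 (Real.rpow_nonneg hyx0.le _))
      · have h2 : (1 + ‖y‖) ^ (-γ) ≤ (1 + n / 2) ^ (-γ) :=
          Real.rpow_le_rpow_of_nonpos h1n2 (by linarith) (by linarith)
        calc h (t / 2) y * ‖y - x‖ ^ (-p)
            ≤ (K * (1 + ‖y‖) ^ (-γ)) * ‖y - x‖ ^ (-p) :=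
              mul_le_mul_of_nonneg_right hh (Real.rpow_nonneg hyx0.le _)
          _ ≤ a2 * ‖y - x‖ ^ (-p) := by
              have : K * (1 + ‖y‖) ^ (-γ) ≤ a2 := by
                rw [ha2def]
                exact mul_le_mul_of_nonneg_left h2 hK0
              exact mul_le_mul_of_nonneg_right this (Real.rpow_nonneg hyx0.le _)
          _ ≤ a1 * (1 + ‖y‖) ^ (-σ) + a2 * ‖y - x‖ ^ (-p) :=
              le_add_of_nonneg_left (mul_nonneg ha10 (Real.rpow_nonneg hy1.le _))
    -- integral bound
    have hG1 : IntegrableOn (fun y : EuclideanSpace ℝ (Fin d) => a1 * (1 + ‖y‖) ^ (-σ))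
        (Metric.ball x r)ᶜ volume := (hIσint.const_mul a1).integrableOn
    have hG2 : IntegrableOn (fun y : EuclideanSpace ℝ (Fin d) => a2 * ‖y - x‖ ^ (-p))
        (Metric.ball x r)ᶜ volume := htint.const_mul a2
    have hbound : (∫ y in (Metric.ball x r)ᶜ, h (t / 2) y * ‖y - x‖ ^ (-p) ∂volume)
        ≤ a1 * Iσ + a2 * (cT * r ^ (-α)) := by
      have step1 : (∫ y in (Metric.ball x r)ᶜ, h (t / 2) y * ‖y - x‖ ^ (-p) ∂volume)
          ≤ ∫ y in (Metric.ball x r)ᶜ,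
              (a1 * (1 + ‖y‖) ^ (-σ) + a2 * ‖y - x‖ ^ (-p)) ∂volume := by
        apply integral_mono_of_nonneg
        · filter_upwards with y
          exact mul_nonneg (h01 (t / 2) (by linarith) y).1
            (Real.rpow_nonneg (norm_nonneg _) _)
        · exact hG1.add hG2
        · filter_upwards [ae_restrict_mem measurableSet_ball.compl] with y hy
          exact hptwise y hy
      have step2 : (∫ y in (Metric.ball x r)ᶜ,
            (a1 * (1 + ‖y‖) ^ (-σ) + a2 * ‖y - x‖ ^ (-p)) ∂volume)
          = (∫ y in (Metric.ball x r)ᶜ, a1 * (1 + ‖y‖) ^ (-σ) ∂volume)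
            + ∫ y in (Metric.ball x r)ᶜ, a2 * ‖y - x‖ ^ (-p) ∂volume :=
        integral_add hG1 hG2
      have step3 : (∫ y in (Metric.ball x r)ᶜ, a1 * (1 + ‖y‖) ^ (-σ) ∂volume) ≤ a1 * Iσ := by
        rw [integral_const_mul, hIσdef]
        apply mul_le_mul_of_nonneg_left _ ha10
        exact setIntegral_le_integral hIσint
          (Filter.Eventually.of_forall fun y => Real.rpow_nonneg (by positivity) _)
      have step4 : (∫ y in (Metric.ball x r)ᶜ, a2 * ‖y - x‖ ^ (-p) ∂volume)
          = a2 * (cT * r ^ (-α)) := by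
        rw [integral_const_mul, htail_val]
      linarith
    -- bounds on a1 * Iσ and a2 * cT * r^(-α)
    have hn1 : (1:ℝ) ≤ n := by linarith
    have hb1 : a1 * Iσ ≤ K * Iσ * 2 ^ p * n ^ (-γ') := by
      have e1 : (n / 2) ^ (-p) = n ^ (-p) * 2 ^ p := by
        rw [Real.div_rpow hn0.le (by norm_num : (0:ℝ) ≤ 2), Real.rpow_neg (by norm_num : (0:ℝ) ≤ 2),
          div_eq_mul_inv, inv_inv]
      have e2 : (1 + n / 2) ^ (σ - γ) ≤ n ^ (σ - γ) :=
        Real.rpow_le_rpow h1n2.le (by linarith) (by linarith)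
      have e3 : a1 ≤ K * 2 ^ p * n ^ (-γ') := by
        calc a1 = K * (n / 2) ^ (-p) * (1 + n / 2) ^ (σ - γ) := ha1def
          _ ≤ K * (n / 2) ^ (-p) * n ^ (σ - γ) := by
              apply mul_le_mul_of_nonneg_left e2
              exact mul_nonneg hK0 (Real.rpow_nonneg hn21.le _)
          _ = K * 2 ^ p * (n ^ (-p) * n ^ (σ - γ)) := by rw [e1]; ring
          _ = K * 2 ^ p * n ^ (-p + (σ - γ)) := by rw [← Real.rpow_add hn0]
          _ ≤ K * 2 ^ p * n ^ (-γ') := by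
              apply mul_le_mul_of_nonneg_left
                (Real.rpow_le_rpow_of_exponent_le hn1 (by linarith))
              positivity
      calc a1 * Iσ ≤ (K * 2 ^ p * n ^ (-γ')) * Iσ := mul_le_mul_of_nonneg_right e3 hIσ0
        _ = K * Iσ * 2 ^ p * n ^ (-γ') := by ring
    have hb2 : a2 * (cT * r ^ (-α)) ≤ K * cT * 2 ^ γ * 4 ^ α * n ^ (-γ') := by
      have e1 : a2 ≤ K * 2 ^ γ * n ^ (-γ) := by
        have e11 : (1 + n / 2) ^ (-γ) ≤ (n / 2) ^ (-γ) :=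
          Real.rpow_le_rpow_of_nonpos hn21 (by linarith) (by linarith)
        have e12 : (n / 2) ^ (-γ) = n ^ (-γ) * 2 ^ γ := by
          rw [Real.div_rpow hn0.le (by norm_num : (0:ℝ) ≤ 2),
            Real.rpow_neg (by norm_num : (0:ℝ) ≤ 2), div_eq_mul_inv, inv_inv]
        calc a2 = K * (1 + n / 2) ^ (-γ) := ha2def
          _ ≤ K * (n / 2) ^ (-γ) := mul_le_mul_of_nonneg_left e11 hK0
          _ = K * 2 ^ γ * n ^ (-γ) := by rw [e12]; ring
      have e2 : r ^ (-α) = n ^ (-α) * 4 ^ α := by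
        rw [hrdef, Real.div_rpow hn0.le (by norm_num : (0:ℝ) ≤ 4),
          Real.rpow_neg (by norm_num : (0:ℝ) ≤ 4), div_eq_mul_inv, inv_inv]
      have e3 : n ^ (-γ) * n ^ (-α) ≤ n ^ (-γ') := by
        rw [← Real.rpow_add hn0]
        apply Real.rpow_le_rpow_of_exponent_le hn1
        linarith
      calc a2 * (cT * r ^ (-α)) ≤ (K * 2 ^ γ * n ^ (-γ)) * (cT * r ^ (-α)) := by
            apply mul_le_mul_of_nonneg_right e1
            exact mul_nonneg hcT0 (Real.rpow_nonneg hr0.le _)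
        _ = K * cT * 2 ^ γ * 4 ^ α * (n ^ (-γ) * n ^ (-α)) := by rw [e2]; ring
        _ ≤ K * cT * 2 ^ γ * 4 ^ α * n ^ (-γ') := by
            apply mul_le_mul_of_nonneg_left e3
            positivity
    have hb3 : n ^ (-γ') ≤ 2 ^ γ' * (1 + n) ^ (-γ') := by
      have e1 : ((1 + n) / 2) ^ (-γ') = (1 + n) ^ (-γ') * 2 ^ γ' := by
        rw [Real.div_rpow (by linarith : (0:ℝ) ≤ 1 + n) (by norm_num : (0:ℝ) ≤ 2),
          Real.rpow_neg (by norm_num : (0:ℝ) ≤ 2), div_eq_mul_inv, inv_inv]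
      have e2 : n ^ (-γ') ≤ ((1 + n) / 2) ^ (-γ') := by
        apply Real.rpow_le_rpow_of_nonpos (by linarith) (by linarith) (by linarith)
      rw [e1] at e2
      linarith
    have hCt : C t * (1 + n) ^ (-p) ≤ C t * (1 + n) ^ (-γ') := by
      apply mul_le_mul_of_nonneg_left _ (hC t ht).le
      apply Real.rpow_le_rpow_of_exponent_le (by linarith)
      linarith
    have hint_le : c * (∫ y in (Metric.ball x r)ᶜ, h (t / 2) y * ‖y - x‖ ^ (-p) ∂volume)
        ≤ c * (a1 * Iσ + a2 * (cT * r ^ (-α))) := mul_le_mul_of_nonneg_left hbound hc.le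
    have h5 : a1 * Iσ + a2 * (cT * r ^ (-α))
        ≤ (K * Iσ * 2 ^ p + K * cT * 2 ^ γ * 4 ^ α) * n ^ (-γ') := by
      calc a1 * Iσ + a2 * (cT * r ^ (-α))
          ≤ K * Iσ * 2 ^ p * n ^ (-γ') + K * cT * 2 ^ γ * 4 ^ α * n ^ (-γ') := by linarith
        _ = (K * Iσ * 2 ^ p + K * cT * 2 ^ γ * 4 ^ α) * n ^ (-γ') := by ring
    have h6 : (K * Iσ * 2 ^ p + K * cT * 2 ^ γ * 4 ^ α) * n ^ (-γ')
        ≤ (K * Iσ * 2 ^ p + K * cT * 2 ^ γ * 4 ^ α) * (2 ^ γ' * (1 + n) ^ (-γ')) := by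
      apply mul_le_mul_of_nonneg_left hb3
      exact add_nonneg
        (mul_nonneg (mul_nonneg hK0 hIσ0) (Real.rpow_nonneg (by norm_num : (0:ℝ) ≤ 2) p))
        (mul_nonneg (mul_nonneg (mul_nonneg hK0 hcT0)
          (Real.rpow_nonneg (by norm_num : (0:ℝ) ≤ 2) γ))
          (Real.rpow_nonneg (by norm_num : (0:ℝ) ≤ 4) α))
    have h7 : c * ((K * Iσ * 2 ^ p + K * cT * 2 ^ γ * 4 ^ α) * n ^ (-γ'))
        ≤ c * ((K * Iσ * 2 ^ p + K * cT * 2 ^ γ * 4 ^ α) * (2 ^ γ' * (1 + n) ^ (-γ'))) :=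
      mul_le_mul_of_nonneg_left h6 hc.le
    have h8 : c * (a1 * Iσ + a2 * (cT * r ^ (-α)))
        ≤ c * ((K * Iσ * 2 ^ p + K * cT * 2 ^ γ * 4 ^ α) * n ^ (-γ')) :=
      mul_le_mul_of_nonneg_left h5 hc.le
    have hMle : M ≤ max ((1 + 2 * R) ^ γ') M := le_max_right _ _
    have hfinal : h t x ≤ M * (1 + n) ^ (-γ') := by
      have := hrec'
      have expand : M * (1 + n) ^ (-γ') = C t * (1 + n) ^ (-γ')
          + c * ((K * Iσ * 2 ^ p + K * cT * 2 ^ γ * 4 ^ α) * (2 ^ γ' * (1 + n) ^ (-γ'))) := by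
        rw [hMdef]; ring
      rw [expand]
      linarith
    calc h t x ≤ M * (1 + n) ^ (-γ') := hfinal
      _ ≤ max ((1 + 2 * R) ^ γ') M * (1 + n) ^ (-γ') :=
          mul_le_mul_of_nonneg_right hMle (Real.rpow_nonneg (by linarith) _)
  · -- small case
    push_neg at hx
    have hb : h t x ≤ (1 + 2 * R) ^ γ' * (1 + ‖x‖) ^ (-γ') := by
      have e : (1:ℝ) = (1 + ‖x‖) ^ γ' * (1 + ‖x‖) ^ (-γ') := by
        rw [← Real.rpow_add h1x]
        have e2 : γ' + -γ' = 0 := by ring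
        rw [e2, Real.rpow_zero]
      calc h t x ≤ 1 := (h01 t ht x).2
        _ = (1 + ‖x‖) ^ γ' * (1 + ‖x‖) ^ (-γ') := e
        _ ≤ (1 + 2 * R) ^ γ' * (1 + ‖x‖) ^ (-γ') := by
            apply mul_le_mul_of_nonneg_right _ hrp0
            exact Real.rpow_le_rpow h1x.le (by linarith) hγ'0
    calc h t x ≤ (1 + 2 * R) ^ γ' * (1 + ‖x‖) ^ (-γ') := hb
      _ ≤ max ((1 + 2 * R) ^ γ') M * (1 + ‖x‖) ^ (-γ') :=
          mul_le_mul_of_nonneg_right (le_max_left _ _) hrp0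

set_option maxHeartbeats 1000000 in
/-- Bootstrap argument for (iii) ⇒ (iv) in Theorem 1.3: a family `h(t,·)` of
`[0,1]`-valued measurable functions satisfying the recursive inequality
automatically decays like `(1+|x|)^{-d-α}`. -/
theorem stmt_4 (d : ℕ) (hd : 1 ≤ d) (α : ℝ) (hα : α ∈ Set.Ioo (0 : ℝ) 2)
    (R : ℝ) (hR : 1 ≤ R) (c : ℝ) (hc : 0 < c)
    (C : ℝ → ℝ) (hC : ∀ t, 0 < t → 0 < C t)
    (h : ℝ → EuclideanSpace ℝ (Fin d) → ℝ)
    (h01 : ∀ t, 0 < t → ∀ x, h t x ∈ Set.Icc (0 : ℝ) 1)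
    (hmeas : ∀ t, 0 < t → Measurable (h t))
    (hrec : ∀ t, 0 < t → ∀ x : EuclideanSpace ℝ (Fin d), 2 * R ≤ ‖x‖ →
      h t x ≤ C t * (1 + ‖x‖) ^ (-(d : ℝ) - α) +
        c * ∫ y in (Metric.ball x (‖x‖ / 4))ᶜ,
              h (t / 2) y * ‖y - x‖ ^ (-(d : ℝ) - α) ∂volume) :
    ∀ t, 0 < t → ∃ C' : ℝ, ∀ x, h t x ≤ C' * (1 + ‖x‖) ^ (-(d : ℝ) - α) := by
  obtain ⟨hα0, hα2⟩ := hα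
  have hd1 : (1 : ℝ) ≤ d := by exact_mod_cast hd
  have hP0 : ∀ t, 0 < t → ∃ K, 0 ≤ K ∧
      ∀ x, h t x ≤ K * (1 + ‖x‖) ^ (-(0:ℝ)) := by
    intro t ht
    refine ⟨1, zero_le_one, fun x => ?_⟩
    rw [neg_zero, Real.rpow_zero, mul_one]
    exact (h01 t ht x).2
  have hX : 0 < (d:ℝ) - α / 4 := by linarith
  have hchain : ∀ k : ℕ, ∀ t, 0 < t → ∃ K, 0 ≤ K ∧
      ∀ x, h t x ≤ K * (1 + ‖x‖) ^ (-(min ((k : ℝ) * (α / 2)) ((d:ℝ) - α / 4))) := by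
    intro k
    induction k with
    | zero =>
      have e : min ((0 : ℕ) * (α / 2) : ℝ) ((d:ℝ) - α / 4) = 0 := by
        rw [Nat.cast_zero, zero_mul]
        exact min_eq_left hX.le
      rw [e]
      exact hP0
    | succ k ih =>
      apply step_aux d hd α ⟨hα0, hα2⟩ R hR c hc C hC h h01 hrec
        (min ((k : ℝ) * (α / 2)) ((d:ℝ) - α / 4))
        (min (((k+1 : ℕ) : ℝ) * (α / 2)) ((d:ℝ) - α / 4))
        ((d:ℝ) + α / 2) ?_ ?_ ?_ ?_ ?_ ?_ ih
      · exact le_min (by positivity) hX.le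
      · exact le_min (by positivity) hX.le
      · have := min_le_right (((k+1 : ℕ) : ℝ) * (α / 2)) ((d:ℝ) - α / 4)
        linarith
      · linarith
      · have := min_le_right ((k : ℝ) * (α / 2)) ((d:ℝ) - α / 4)
        linarith
      · have h1 : min (((k+1 : ℕ) : ℝ) * (α / 2)) ((d:ℝ) - α / 4)
            ≤ min ((k : ℝ) * (α / 2) + α / 2) (((d:ℝ) - α / 4) + α / 2) := by
          apply min_le_min _ (by linarith)
          push_cast
          linarith
        rw [min_add_add_right] at h1
        linarith
  have hPX : ∀ t, 0 < t → ∃ K, 0 ≤ K ∧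
      ∀ x, h t x ≤ K * (1 + ‖x‖) ^ (-((d:ℝ) - α / 4)) := by
    obtain ⟨k, hk⟩ := exists_nat_ge (((d:ℝ) - α / 4) * (2 / α))
    have e : min ((k : ℝ) * (α / 2)) ((d:ℝ) - α / 4) = (d:ℝ) - α / 4 := by
      apply min_eq_right
      have h1 : ((d:ℝ) - α / 4) * (2 / α) * (α / 2) ≤ (k : ℝ) * (α / 2) := by
        apply mul_le_mul_of_nonneg_right hk
        positivity
      have h2 : ((d:ℝ) - α / 4) * (2 / α) * (α / 2) = (d:ℝ) - α / 4 := by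
        field_simp
      linarith
    have := hchain k
    rw [e] at this
    exact this
  have hmid : ∀ t, 0 < t → ∃ K, 0 ≤ K ∧
      ∀ x, h t x ≤ K * (1 + ‖x‖) ^ (-((d:ℝ) + α / 4)) :=
    step_aux d hd α ⟨hα0, hα2⟩ R hR c hc C hC h h01 hrec
      ((d:ℝ) - α / 4) ((d:ℝ) + α / 4) ((d:ℝ) + α / 2)
      (by linarith) (by linarith) (by linarith) (by linarith) (by linarith) (by linarith) hPX
  have hfin : ∀ t, 0 < t → ∃ K, 0 ≤ K ∧
      ∀ x, h t x ≤ K * (1 + ‖x‖) ^ (-((d:ℝ) + α)) :=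
    step_aux d hd α ⟨hα0, hα2⟩ R hR c hc C hC h h01 hrec
      ((d:ℝ) + α / 4) ((d:ℝ) + α) ((d:ℝ) + α / 4)
      (by linarith) (by linarith) (by linarith) (by linarith) (by linarith) (by linarith) hmid
  intro t ht
  obtain ⟨K, _, hKb⟩ := hfin t ht
  refine ⟨K, fun x => ?_⟩
  have e : -(d : ℝ) - α = -((d:ℝ) + α) := by ring
  rw [e]
  exact hKb x
end
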